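/- arXiv:2311.10692 — 10 statements merged into one kernel-verified Lean document; each statement's English description precedes it below -/
import Mathlib

section
/- Let p and q be probability mass functions on ℕ such that ∑_{l=0}^{k} p(l) ≤ ∑_{l=0}^{k} q(l) for every k ∈ ℕ (i.e. a random variable with law p is stochastically larger than one with law q). Then there exists a probability mass function μ on ℕ × ℕ such that: (a) the first marginal of μ is p and the second marginal is q; (b) μ({(x,y) : x ≠ y}) = d_TV(p,q); and (c) μ({(x,y) : x ≥ y}) = 1. -/
open scoped BigOperators
open Finset Filter

/-- Clamp identity used for the quantile coupling overlap lengths. -/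
lemma clamp_overlap (a b u v : ℝ) (hab : a ≤ b) (huv : u ≤ v) :
    max 0 (min b v - max a u) = max a (min b v) - max a (min b u) := by
  rcases le_total u a with h1 | h1 <;> rcases le_total v a with h2 | h2 <;>
    rcases le_total u b with h3 | h3 <;> rcases le_total v b with h4 | h4 <;>
      simp [max_def, min_def] <;> split_ifs <;> linarith

/-- Row sums of the quantile coupling of residuals. -/
lemma row_hasSum (a b α : ℝ) (H : ℕ → ℝ) (ha : 0 ≤ a) (hab : a ≤ b) (hbα : b ≤ α)
    (hH0 : H 0 = 0) (hHmono : Monotone H) (hHlim : Tendsto H atTop (nhds α)) :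
    HasSum (fun y => max 0 (min b (H (y + 1)) - max a (H y))) (b - a) := by
  set c : ℕ → ℝ := fun n => max a (min b (H n)) with hc
  have hb0 : (0:ℝ) ≤ b := le_trans ha hab
  have hterm : ∀ y, max 0 (min b (H (y + 1)) - max a (H y)) = c (y + 1) - c y := by
    intro y
    exact clamp_overlap a b (H y) (H (y + 1)) hab (hHmono (Nat.le_succ y))
  have hc0 : c 0 = a := by
    simp [hc, hH0, min_eq_right hb0, max_eq_left ha]
  have hcb : ∀ n, c n ≤ b := fun n => max_le hab (min_le_left _ _)
  have hpart : ∀ n, ∑ y ∈ range n, max 0 (min b (H (y + 1)) - max a (H y)) = c n - a := by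
    intro n
    calc ∑ y ∈ range n, max 0 (min b (H (y + 1)) - max a (H y))
        = ∑ y ∈ range n, (c (y + 1) - c y) := Finset.sum_congr rfl fun y _ => hterm y
      _ = c n - c 0 := Finset.sum_range_sub c n
      _ = c n - a := by rw [hc0]
  have hnonneg : ∀ y, 0 ≤ max 0 (min b (H (y + 1)) - max a (H y)) := fun y => le_max_left _ _
  have hS : Summable (fun y => max 0 (min b (H (y + 1)) - max a (H y))) := by
    refine summable_of_sum_range_le hnonneg (c := b - a) ?_
    intro n
    rw [hpart n]
    linarith [hcb n]
  have htend : Tendsto (fun n => ∑ y ∈ range n, max 0 (min b (H (y + 1)) - max a (H y)))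
      atTop (nhds (b - a)) := by
    have h1 : Tendsto c atTop (nhds (max a (min b α))) :=
      tendsto_const_nhds.max (tendsto_const_nhds.min hHlim)
    have h2 : max a (min b α) = b := by rw [min_eq_left hbα, max_eq_right hab]
    rw [h2] at h1
    have h3 : Tendsto (fun n => c n - a) atTop (nhds (b - a)) := h1.sub tendsto_const_nhds
    exact h3.congr fun n => (hpart n).symm
  have hts := hS.hasSum.tendsto_sum_nat
  have heq : ∑' y, max 0 (min b (H (y + 1)) - max a (H y)) = b - a :=
    tendsto_nhds_unique hts htend
  rw [← heq]
  exact hS.hasSum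

/-- Maximal monotone coupling of two pmfs on ℕ when the first is stochastically
larger than the second. -/
theorem coupling_stochastically_larger
    (p q : ℕ → ℝ)
    (hp0 : ∀ k, 0 ≤ p k) (hq0 : ∀ k, 0 ≤ q k)
    (hp1 : ∑' k : ℕ, p k = 1) (hq1 : ∑' k : ℕ, q k = 1)
    (hdom : ∀ k : ℕ, ∑ l ∈ Finset.range (k + 1), p l ≤ ∑ l ∈ Finset.range (k + 1), q l) :
    ∃ μ : ℕ × ℕ → ℝ,
      (∀ z, 0 ≤ μ z) ∧
      (∑' z : ℕ × ℕ, μ z = 1) ∧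
      (∀ x : ℕ, ∑' y : ℕ, μ (x, y) = p x) ∧
      (∀ y : ℕ, ∑' x : ℕ, μ (x, y) = q y) ∧
      ((∑' z : ℕ × ℕ, if z.1 ≠ z.2 then μ z else 0)
         = (1 / 2) * ∑' k : ℕ, |p k - q k|) ∧
      ((∑' z : ℕ × ℕ, if z.2 ≤ z.1 then μ z else 0) = 1) := by
  classical
  have hpS : Summable p := by
    by_contra h; rw [tsum_eq_zero_of_not_summable h] at hp1; norm_num at hp1
  have hqS : Summable q := by
    by_contra h; rw [tsum_eq_zero_of_not_summable h] at hq1; norm_num at hq1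
  set m : ℕ → ℝ := fun k => min (p k) (q k) with hm
  have hm0 : ∀ k, 0 ≤ m k := fun k => le_min (hp0 k) (hq0 k)
  have hmS : Summable m := Summable.of_nonneg_of_le hm0 (fun k => min_le_left _ _) hpS
  set p' : ℕ → ℝ := fun k => p k - m k with hp'
  set q' : ℕ → ℝ := fun k => q k - m k with hq'
  have hp'0 : ∀ k, 0 ≤ p' k := fun k => by simp [hp', hm]
  have hq'0 : ∀ k, 0 ≤ q' k := fun k => by simp [hq', hm]
  have hp'S : Summable p' := hpS.sub hmS
  have hq'S : Summable q' := hqS.sub hmS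
  set α : ℝ := ∑' k, p' k with hα
  have hαq : ∑' k, q' k = α := by
    rw [hα, hp', hq', Summable.tsum_sub hpS hmS, Summable.tsum_sub hqS hmS, hp1, hq1]
  have hmin0 : ∀ k, p' k = 0 ∨ q' k = 0 := by
    intro k
    rcases le_total (p k) (q k) with h | h
    · left; simp [hp', hm, min_eq_left h]
    · right; simp [hq', hm, min_eq_right h]
  set G : ℕ → ℝ := fun n => ∑ l ∈ range n, p' l with hG
  set H : ℕ → ℝ := fun n => ∑ l ∈ range n, q' l with hH
  have hGmono : Monotone G := by
    apply monotone_nat_of_le_succ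
    intro n
    simp only [hG, Finset.sum_range_succ]
    linarith [hp'0 n]
  have hHmono : Monotone H := by
    apply monotone_nat_of_le_succ
    intro n
    simp only [hH, Finset.sum_range_succ]
    linarith [hq'0 n]
  have hG0 : ∀ n, 0 ≤ G n := fun n => Finset.sum_nonneg fun l _ => hp'0 l
  have hH0 : ∀ n, 0 ≤ H n := fun n => Finset.sum_nonneg fun l _ => hq'0 l
  have hGH : ∀ n, G n ≤ H n := by
    intro n
    cases n with
    | zero => simp [hG, hH]
    | succ k =>
      have h1 : G (k + 1) = (∑ l ∈ range (k + 1), p l) - ∑ l ∈ range (k + 1), m l := by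
        simp [hG, hp', Finset.sum_sub_distrib]
      have h2 : H (k + 1) = (∑ l ∈ range (k + 1), q l) - ∑ l ∈ range (k + 1), m l := by
        simp [hH, hq', Finset.sum_sub_distrib]
      rw [h1, h2]
      linarith [hdom k]
  have hGα : ∀ n, G n ≤ α := fun n => Summable.sum_le_tsum (range n) (fun l _ => hp'0 l) hp'S
  have hHα : ∀ n, H n ≤ α := fun n => by
    rw [← hαq]; exact Summable.sum_le_tsum (range n) (fun l _ => hq'0 l) hq'S
  have hGlim : Tendsto G atTop (nhds α) := hp'S.hasSum.tendsto_sum_nat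
  have hHlim : Tendsto H atTop (nhds α) := by
    rw [← hαq]; exact hq'S.hasSum.tendsto_sum_nat
  set ν : ℕ → ℕ → ℝ := fun x y => max 0 (min (G (x + 1)) (H (y + 1)) - max (G x) (H y)) with hν
  have hν0 : ∀ x y, 0 ≤ ν x y := fun x y => le_max_left _ _
  have hrow : ∀ x, HasSum (fun y => ν x y) (p' x) := by
    intro x
    have h := row_hasSum (G x) (G (x + 1)) α H (hG0 x) (hGmono (Nat.le_succ x)) (hGα (x + 1))
      (by simp [hH]) hHmono hHlim
    have hd : G (x + 1) - G x = p' x := by simp [hG, Finset.sum_range_succ]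
    rw [hd] at h
    exact h
  have hcol : ∀ y, HasSum (fun x => ν x y) (q' y) := by
    intro y
    have h := row_hasSum (H y) (H (y + 1)) α G (hH0 y) (hHmono (Nat.le_succ y)) (hHα (y + 1))
      (by simp [hG]) hGmono hGlim
    have hd : H (y + 1) - H y = q' y := by simp [hH, Finset.sum_range_succ]
    rw [hd] at h
    have hee : (fun x => ν x y)
        = fun x => max 0 (min (H (y + 1)) (G (x + 1)) - max (H y) (G x)) := by
      funext x
      simp only [hν]
      rw [min_comm (G (x + 1)), max_comm (G x)]
    rw [hee]
    exact h
  have hdiag : ∀ x, ν x x = 0 := by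
    intro x
    have h1 : ν x x ≤ p' x := by
      have hle : min (G (x + 1)) (H (x + 1)) - max (G x) (H x) ≤ G (x + 1) - G x :=
        sub_le_sub (min_le_left _ _) (le_max_left _ _)
      have hd : G (x + 1) - G x = p' x := by simp [hG, Finset.sum_range_succ]
      rw [hd] at hle
      exact max_le (hp'0 x) hle
    have h2 : ν x x ≤ q' x := by
      have hle : min (G (x + 1)) (H (x + 1)) - max (G x) (H x) ≤ H (x + 1) - H x :=
        sub_le_sub (min_le_right _ _) (le_max_right _ _)
      have hd : H (x + 1) - H x = q' x := by simp [hH, Finset.sum_range_succ]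
      rw [hd] at hle
      exact max_le (hq'0 x) hle
    rcases hmin0 x with h | h
    · exact le_antisymm (h ▸ h1) (hν0 x x)
    · exact le_antisymm (h ▸ h2) (hν0 x x)
  have hmono0 : ∀ x y, x < y → ν x y = 0 := by
    intro x y hxy
    have h1 : G (x + 1) ≤ H y := le_trans (hGH (x + 1)) (hHmono hxy)
    have h2 : min (G (x + 1)) (H (y + 1)) - max (G x) (H y) ≤ 0 := by
      have := min_le_left (G (x + 1)) (H (y + 1))
      have := le_max_right (G x) (H y)
      linarith
    simp [hν, max_eq_left h2]
  -- row-wise indicator sum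
  have hind : ∀ x : ℕ, HasSum (fun y : ℕ => if x = y then m x else 0) (m x) := by
    intro x
    have hee : (fun y : ℕ => if x = y then m x else 0)
        = fun y : ℕ => if y = x then m x else 0 := by
      funext y; simp [eq_comm]
    rw [hee]
    exact hasSum_ite_eq x (m x)
  have hrowμ : ∀ x, HasSum (fun y => ν x y + if x = y then m x else 0) (p x) := by
    intro x
    have h := (hrow x).add (hind x)
    have hpx : p' x + m x = p x := by simp [hp']
    rwa [hpx] at h
  have hcolμ : ∀ y, HasSum (fun x => ν x y + if x = y then m x else 0) (q y) := by
    intro y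
    have h2 : HasSum (fun x : ℕ => if x = y then m x else 0) (m y) := by
      have hee : (fun x : ℕ => if x = y then m x else 0)
          = fun x : ℕ => if x = y then m y else 0 := by
        funext x
        split_ifs with h
        · rw [h]
        · rfl
      rw [hee]
      exact hasSum_ite_eq y (m y)
    have h := (hcol y).add h2
    have hqy : q' y + m y = q y := by simp [hq']
    rwa [hqy] at h
  have hnn : ∀ z : ℕ × ℕ, (0:ℝ) ≤ ν z.1 z.2 + (if z.1 = z.2 then m z.1 else 0) := by
    intro z
    have h : (0:ℝ) ≤ if z.1 = z.2 then m z.1 else 0 := by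
      split_ifs; exacts [hm0 z.1, le_refl 0]
    linarith [hν0 z.1 z.2]
  have hSμ : Summable (fun z : ℕ × ℕ => ν z.1 z.2 + (if z.1 = z.2 then m z.1 else 0)) := by
    rw [summable_prod_of_nonneg (fun z => hnn z)]
    constructor
    · intro x; exact (hrowμ x).summable
    · exact hpS.congr fun x => ((hrowμ x).tsum_eq).symm
  have htotal : ∑' z : ℕ × ℕ, (ν z.1 z.2 + (if z.1 = z.2 then m z.1 else 0)) = 1 := by
    rw [Summable.tsum_prod' hSμ (fun x => (hrowμ x).summable)]
    calc ∑' (x : ℕ) (y : ℕ), (ν x y + if x = y then m x else 0)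
        = ∑' (x : ℕ), p x := tsum_congr fun x => (hrowμ x).tsum_eq
      _ = 1 := hp1
  refine ⟨fun z => ν z.1 z.2 + (if z.1 = z.2 then m z.1 else 0), fun z => hnn z, htotal,
    fun x => (hrowμ x).tsum_eq, fun y => (hcolμ y).tsum_eq, ?_, ?_⟩
  · -- off-diagonal mass = total variation distance
    have hfun : (fun z : ℕ × ℕ =>
        if z.1 ≠ z.2 then ν z.1 z.2 + (if z.1 = z.2 then m z.1 else 0) else 0)
        = fun z : ℕ × ℕ => ν z.1 z.2 := by
      funext z
      by_cases h : z.1 = z.2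
      · simp [h, h ▸ hdiag z.1]
      · simp [h]
    rw [hfun]
    have hSν : Summable (fun z : ℕ × ℕ => ν z.1 z.2) := by
      rw [summable_prod_of_nonneg (fun z => hν0 z.1 z.2)]
      constructor
      · intro x; exact (hrow x).summable
      · exact hp'S.congr fun x => ((hrow x).tsum_eq).symm
    rw [Summable.tsum_prod' hSν (fun x => (hrow x).summable)]
    have h1 : ∑' (x : ℕ) (y : ℕ), ν x y = α :=
      tsum_congr fun x => (hrow x).tsum_eq
    have h2 : ∀ k, |p k - q k| = p' k + q' k := by
      intro k
      rcases le_total (p k) (q k) with h | h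
      · rw [abs_of_nonpos (by linarith)]
        simp only [hp', hq', hm, min_eq_left h]
        ring
      · rw [abs_of_nonneg (by linarith)]
        simp only [hp', hq', hm, min_eq_right h]
        ring
    have h3 : ∑' k, |p k - q k| = α + α := by
      calc ∑' k, |p k - q k| = ∑' k, (p' k + q' k) := tsum_congr h2
        _ = (∑' k, p' k) + ∑' k, q' k := Summable.tsum_add hp'S hq'S
        _ = α + α := by rw [← hα, hαq]
    rw [h1, h3]
    ring
  · -- monotone coupling
    have hfun : (fun z : ℕ × ℕ =>
        if z.2 ≤ z.1 then ν z.1 z.2 + (if z.1 = z.2 then m z.1 else 0) else 0)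
        = fun z : ℕ × ℕ => ν z.1 z.2 + (if z.1 = z.2 then m z.1 else 0) := by
      funext z
      by_cases h : z.2 ≤ z.1
      · simp [h]
      · push_neg at h
        have hne : z.1 ≠ z.2 := Nat.ne_of_lt h
        simp [not_le.mpr h, hmono0 z.1 z.2 h, hne]
    rw [hfun]
    exact htotal
end

section
/- Let 0 ≤ λ < λ′ and let X ~ Poi(λ), X′ ~ Poi(λ′). Then E√X′ − E√X ≤ 2(√λ′ − √λ), where E√X = ∑_{k∈ℕ} √k · exp(−λ) λ^k / k!. -/
noncomputable def fK (k : ℕ) (t : ℝ) : ℝ := Real.sqrt k * (Real.exp (-t) * t ^ k / k.factorial)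

noncomputable def gK (k : ℕ) (t : ℝ) : ℝ :=
  Real.sqrt k * ((-Real.exp (-t) * t ^ k + Real.exp (-t) * (k * t ^ (k - 1))) / k.factorial)

lemma hasDerivAt_fK (k : ℕ) (t : ℝ) : HasDerivAt (fK k) (gK k t) t := by
  have h1 : HasDerivAt (fun t : ℝ => Real.exp (-t)) (-Real.exp (-t)) t := by
    simpa using (hasDerivAt_neg t).exp
  have h2 : HasDerivAt (fun t : ℝ => t ^ k) ((k : ℝ) * t ^ (k - 1)) t := hasDerivAt_pow k t
  have h3 := ((h1.mul h2).div_const (k.factorial : ℝ)).const_mul (Real.sqrt k)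
  exact h3

lemma sqrt_le_two_pow (k : ℕ) : Real.sqrt k ≤ 2 ^ k := by
  have h2 : (k : ℝ) ≤ (2 : ℝ) ^ k := by exact_mod_cast (Nat.lt_two_pow_self (n := k)).le
  have hp : (1:ℝ) ≤ (2:ℝ) ^ k := one_le_pow₀ (by norm_num)
  calc Real.sqrt k ≤ Real.sqrt (((2:ℝ) ^ k) ^ 2) := Real.sqrt_le_sqrt (by nlinarith)
    _ = 2 ^ k := Real.sqrt_sq (by positivity)

lemma summable_aux {c : ℕ → ℝ} {C : ℝ} (hc : ∀ k, |c k| ≤ C * 2 ^ k) (x : ℝ) :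
    Summable (fun k : ℕ => c k * x ^ k / k.factorial) := by
  apply Summable.of_norm_bounded ((Real.summable_pow_div_factorial (2 * |x|)).mul_left C)
  intro k
  have h1 : ‖c k * x ^ k / (k.factorial : ℝ)‖ = |c k| * |x| ^ k / k.factorial := by
    rw [norm_div, norm_mul, Real.norm_eq_abs, Real.norm_eq_abs, abs_pow, Real.norm_natCast]
  have h2 : C * ((2 * |x|) ^ k / k.factorial) = (C * 2 ^ k) * |x| ^ k / k.factorial := by
    rw [mul_pow]; ring
  rw [h1, h2]
  gcongr
  exact hc k

lemma exp_tsum (t : ℝ) : Real.exp t = ∑' n : ℕ, t ^ n / n.factorial := by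
  rw [Real.exp_eq_exp_ℝ, NormedSpace.exp_eq_tsum_div]

noncomputable def uB (R : ℝ) (k : ℕ) : ℝ :=
  Real.exp 1 * ((2:ℝ) ^ k * (k * R ^ (k - 1)) / k.factorial + (2 * R) ^ k / k.factorial)

lemma summable_uB (R : ℝ) : Summable (uB R) := by
  apply Summable.mul_left
  apply Summable.add
  · rw [← summable_nat_add_iff 1]
    have e : (fun j : ℕ => (2:ℝ) ^ (j+1) * ((j+1 : ℕ) * R ^ ((j+1) - 1)) / (j+1).factorial)
        = fun j : ℕ => 2 * ((2 * R) ^ j / j.factorial) := by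
      funext j
      have hf : ((j+1).factorial : ℝ) = ((j:ℝ)+1) * j.factorial := by
        push_cast [Nat.factorial_succ]; ring
      have hj : (0:ℝ) < (j:ℝ) + 1 := by positivity
      have hfac : (0:ℝ) < j.factorial := by positivity
      rw [Nat.add_sub_cancel, hf]
      push_cast
      rw [mul_pow]
      field_simp
      ring
    rw [e]
    exact (Real.summable_pow_div_factorial (2*R)).mul_left 2
  · exact Real.summable_pow_div_factorial (2*R)

lemma gK_bound {R : ℝ} (hR : 1 ≤ R) (k : ℕ) {t : ℝ} (ht : t ∈ Set.Ioo (-1:ℝ) R) :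
    ‖gK k t‖ ≤ uB R k := by
  have hE : Real.exp (-t) ≤ Real.exp 1 := Real.exp_le_exp.2 (by linarith [ht.1])
  have htR : |t| ≤ R := abs_le.2 ⟨by linarith [ht.1], ht.2.le⟩
  have hEpos : (0:ℝ) < Real.exp (-t) := Real.exp_pos _
  have h1 : |(-Real.exp (-t) * t ^ k + Real.exp (-t) * (k * t ^ (k-1)))|
      ≤ Real.exp 1 * R ^ k + Real.exp 1 * (k * R ^ (k-1)) := by
    calc |(-Real.exp (-t) * t ^ k + Real.exp (-t) * (k * t ^ (k-1)))|
        ≤ |(-Real.exp (-t)) * t ^ k| + |Real.exp (-t) * (k * t ^ (k-1))| := by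
          rw [neg_mul]; exact abs_add_le _ _
      _ = Real.exp (-t) * |t| ^ k + Real.exp (-t) * (k * |t| ^ (k-1)) := by
          rw [abs_mul, abs_neg, abs_mul, Real.abs_exp, abs_pow, abs_mul, abs_pow, Nat.abs_cast]
      _ ≤ Real.exp 1 * R ^ k + Real.exp 1 * (k * R ^ (k-1)) := by
          gcongr <;> first | exact abs_nonneg t | positivity
  have h2 : ‖gK k t‖ = Real.sqrt k * |(-Real.exp (-t) * t ^ k + Real.exp (-t) * (k * t ^ (k-1)))|
      / k.factorial := by
    rw [gK, Real.norm_eq_abs, abs_mul, abs_div, Nat.abs_cast,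
      abs_of_nonneg (Real.sqrt_nonneg _), mul_div_assoc]
  rw [h2]
  have hs := sqrt_le_two_pow k
  have hsn := Real.sqrt_nonneg (k:ℝ)
  have hfac : (0:ℝ) < k.factorial := by positivity
  have h3 : Real.sqrt k * |(-Real.exp (-t) * t ^ k + Real.exp (-t) * (k * t ^ (k-1)))| / k.factorial
      ≤ 2 ^ k * (Real.exp 1 * R ^ k + Real.exp 1 * (k * R ^ (k-1))) / k.factorial := by
    gcongr
  refine h3.trans (le_of_eq ?_)
  rw [uB, mul_pow]
  field_simp
  ring

lemma summable_fK_zero : Summable (fun k => fK k 0) := by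
  have e : (fun k => fK k 0) = fun _ => (0:ℝ) := by
    funext k
    rcases Nat.eq_zero_or_pos k with hk | hk
    · subst hk; simp [fK]
    · simp [fK, zero_pow hk.ne']
  rw [e]; exact summable_zero

lemma hasDerivAt_f {R : ℝ} (hR : 1 ≤ R) {t : ℝ} (ht : t ∈ Set.Ioo (-1:ℝ) R) :
    HasDerivAt (fun y => ∑' k, fK k y) (∑' k, gK k t) t := by
  apply hasDerivAt_tsum_of_isPreconnected (summable_uB R) isOpen_Ioo
    ((convex_Ioo _ _).isPreconnected) (fun n y _ => hasDerivAt_fK n y)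
    (fun n y hy => gK_bound hR n hy) (Set.mem_Ioo.2 ⟨by norm_num, by linarith⟩)
    summable_fK_zero ht

lemma key_ineq (j : ℕ) {t : ℝ} (ht : 0 < t) :
    Real.sqrt ((j:ℝ)+1) - Real.sqrt j
      ≤ 1/(2*Real.sqrt t) + Real.sqrt t/(2*((j:ℝ)+1)) := by
  set s := Real.sqrt t with hsdef
  have hs : 0 < s := Real.sqrt_pos.2 ht
  have hc : (0:ℝ) < (j:ℝ)+1 := by positivity
  set a := Real.sqrt ((j:ℝ)+1) with hadef
  have ha : 0 < a := Real.sqrt_pos.2 hc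
  have ha2 : a^2 = (j:ℝ)+1 := Real.sq_sqrt hc.le
  have hb : 0 ≤ Real.sqrt j := Real.sqrt_nonneg _
  have hb2 : (Real.sqrt j)^2 = (j:ℝ) := Real.sq_sqrt (by positivity)
  have hab : Real.sqrt j ≤ a := Real.sqrt_le_sqrt (by linarith)
  have h1 : a - Real.sqrt j ≤ 1/a := by
    rw [le_div_iff₀ ha]
    nlinarith
  have h2 : 1/a ≤ 1/(2*s) + s/(2*((j:ℝ)+1)) := by
    rw [← ha2]
    have e : 1/(2*s) + s/(2*a^2) - 1/a = (a-s)^2/(2*s*a^2) := by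
      field_simp
      ring
    have h3 : (0:ℝ) ≤ (a-s)^2/(2*s*a^2) := by positivity
    linarith [e ▸ h3]
  linarith

lemma summable_A {t : ℝ} : Summable (fun j : ℕ => Real.sqrt ((j:ℝ)+1) * (Real.exp (-t) * t^j / j.factorial)) := by
  have := summable_aux (c := fun j : ℕ => Real.sqrt ((j:ℝ)+1) * Real.exp (-t))
    (C := 2 * Real.exp (-t)) (x := t) (fun j => by
      rw [abs_mul, Real.abs_exp, abs_of_nonneg (Real.sqrt_nonneg _)]
      have h1 : Real.sqrt ((j:ℝ)+1) ≤ 2^(j+1) := by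
        have := sqrt_le_two_pow (j+1)
        rwa [Nat.cast_add, Nat.cast_one] at this
      calc Real.sqrt ((j:ℝ)+1) * Real.exp (-t) ≤ 2^(j+1) * Real.exp (-t) := by
            gcongr
        _ = 2 * Real.exp (-t) * 2^j := by ring)
  apply this.congr
  intro j
  ring

lemma summable_d {t : ℝ} : Summable (fun k : ℕ => Real.sqrt k * (Real.exp (-t) * t^k / k.factorial)) := by
  have := summable_aux (c := fun k : ℕ => Real.sqrt k * Real.exp (-t))
    (C := Real.exp (-t)) (x := t) (fun k => by
      rw [abs_mul, Real.abs_exp, abs_of_nonneg (Real.sqrt_nonneg _)]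
      calc Real.sqrt k * Real.exp (-t) ≤ 2^k * Real.exp (-t) := by
            gcongr; exact sqrt_le_two_pow k
        _ = Real.exp (-t) * 2^k := by ring)
  apply this.congr
  intro j
  ring

lemma gK_succ (j : ℕ) (t : ℝ) :
    gK (j+1) t = Real.sqrt ((j:ℝ)+1) * (Real.exp (-t) * t^j / j.factorial)
      - Real.sqrt ((j:ℝ)+1) * (Real.exp (-t) * t^(j+1) / (j+1).factorial) := by
  rw [gK, Nat.add_sub_cancel]
  have hf : ((j+1).factorial : ℝ) = ((j:ℝ)+1) * j.factorial := by
    push_cast [Nat.factorial_succ]; ring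
  have hj : (0:ℝ) < (j:ℝ) + 1 := by positivity
  have hfac : (0:ℝ) < j.factorial := by positivity
  rw [hf]
  push_cast
  field_simp
  ring

lemma tsum_gK_eq (t : ℝ) :
    ∑' k, gK k t = ∑' j : ℕ, (Real.sqrt ((j:ℝ)+1) - Real.sqrt j) * (Real.exp (-t) * t^j / j.factorial) := by
  have hA : Summable (fun j : ℕ => Real.sqrt ((j:ℝ)+1) * (Real.exp (-t) * t^j / j.factorial)) := summable_A
  have hd : Summable (fun k : ℕ => Real.sqrt k * (Real.exp (-t) * t^k / k.factorial)) := summable_d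
  have hB : Summable (fun j : ℕ => Real.sqrt ((j:ℝ)+1) * (Real.exp (-t) * t^(j+1) / (j+1).factorial)) := by
    have := (summable_nat_add_iff 1).2 hd
    apply this.congr
    intro j
    push_cast
    ring_nf
  have hgsucc : Summable (fun j : ℕ => gK (j+1) t) := by
    apply (hA.sub hB).congr
    intro j
    rw [gK_succ]
  have hg : Summable (fun k => gK k t) := (summable_nat_add_iff 1).1 hgsucc
  have h0 : gK 0 t = 0 := by simp [gK]
  rw [Summable.tsum_eq_zero_add hg, h0, zero_add]
  have e1 : ∑' j : ℕ, gK (j+1) t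
      = (∑' j : ℕ, Real.sqrt ((j:ℝ)+1) * (Real.exp (-t) * t^j / j.factorial))
        - ∑' j : ℕ, Real.sqrt ((j:ℝ)+1) * (Real.exp (-t) * t^(j+1) / (j+1).factorial) := by
    rw [← Summable.tsum_sub hA hB]
    exact tsum_congr (fun j => gK_succ j t)
  have e2 : ∑' j : ℕ, Real.sqrt ((j:ℝ)+1) * (Real.exp (-t) * t^(j+1) / (j+1).factorial)
      = ∑' k : ℕ, Real.sqrt k * (Real.exp (-t) * t^k / k.factorial) := by
    rw [Summable.tsum_eq_zero_add hd]
    simp only [Real.sqrt_zero, Nat.cast_zero, zero_mul, zero_add]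
    apply tsum_congr
    intro j
    push_cast
    ring_nf
  rw [e1, e2, ← Summable.tsum_sub hA hd]
  apply tsum_congr
  intro j
  ring

lemma tsum_pow_div_factorial_succ (t : ℝ) :
    ∑' j : ℕ, t^(j+1) / (j+1).factorial = Real.exp t - 1 := by
  have hs := Real.summable_pow_div_factorial t
  have h := Summable.tsum_eq_zero_add hs
  rw [← exp_tsum t] at h
  simp only [pow_zero, Nat.factorial_zero, Nat.cast_one] at h
  linarith

lemma tsum_gK_le {t : ℝ} (ht : 0 < t) : ∑' k, gK k t ≤ 1 / Real.sqrt t := by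
  rw [tsum_gK_eq]
  set E := Real.exp (-t) with hE
  have hEpos : 0 < E := Real.exp_pos _
  have hEle1 : E ≤ 1 := Real.exp_le_one_iff.2 (by linarith)
  set s := Real.sqrt t with hs
  have hspos : 0 < s := Real.sqrt_pos.2 ht
  have hs2 : s^2 = t := Real.sq_sqrt ht.le
  have hP : Summable (fun j : ℕ => E * (t^j / j.factorial)) :=
    (Real.summable_pow_div_factorial t).mul_left E
  have hQ : Summable (fun j : ℕ => (E/((j:ℝ)+1)) * t^j / j.factorial) := by
    apply summable_aux (C := E)
    intro j
    rw [abs_div, abs_of_nonneg hEpos.le, abs_of_nonneg (by positivity : (0:ℝ) ≤ (j:ℝ)+1)]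
    have h1 : (1:ℝ) ≤ ((j:ℝ)+1) := by norm_num
    have h2 : (1:ℝ) ≤ (2:ℝ)^j := one_le_pow₀ (by norm_num)
    calc E / ((j:ℝ)+1) ≤ E / 1 := by gcongr
      _ = E := div_one E
      _ ≤ E * 2^j := by nlinarith
  have hLHS : Summable (fun j : ℕ =>
      (Real.sqrt ((j:ℝ)+1) - Real.sqrt j) * (E * t^j / j.factorial)) := by
    have := summable_aux (c := fun j : ℕ => (Real.sqrt ((j:ℝ)+1) - Real.sqrt j) * E)
      (C := E) (x := t) (fun j => by
        have h1 : Real.sqrt ((j:ℝ)) ≤ Real.sqrt ((j:ℝ)+1) := Real.sqrt_le_sqrt (by linarith)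
        have h2 : Real.sqrt ((j:ℝ)+1) - Real.sqrt j ≤ 1 := by
          nlinarith [Real.sq_sqrt (by positivity : (0:ℝ) ≤ (j:ℝ)+1),
            Real.sq_sqrt (by positivity : (0:ℝ) ≤ (j:ℝ)), Real.sqrt_nonneg ((j:ℝ)),
            Real.sqrt_nonneg ((j:ℝ)+1)]
        have h3 : (1:ℝ) ≤ (2:ℝ)^j := one_le_pow₀ (by norm_num)
        rw [abs_mul, abs_of_nonneg hEpos.le, abs_of_nonneg (by linarith : (0:ℝ) ≤ Real.sqrt ((j:ℝ)+1) - Real.sqrt j)]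
        nlinarith)
    apply this.congr
    intro j
    ring
  have hterm : ∀ j : ℕ, (Real.sqrt ((j:ℝ)+1) - Real.sqrt j) * (E * t^j / j.factorial)
      ≤ (1/(2*s)) * (E * (t^j / j.factorial)) + (s/2) * ((E/((j:ℝ)+1)) * t^j / j.factorial) := by
    intro j
    have hkey := key_ineq j ht
    have hPnn : (0:ℝ) ≤ E * t^j / j.factorial := by positivity
    have h1 := mul_le_mul_of_nonneg_right hkey hPnn
    refine h1.trans (le_of_eq ?_)
    have hj : ((j:ℝ)+1) ≠ 0 := by positivity
    field_simp
    ring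
  have hRHS : Summable (fun j : ℕ => (1/(2*s)) * (E * (t^j / j.factorial))
      + (s/2) * ((E/((j:ℝ)+1)) * t^j / j.factorial)) :=
    (hP.mul_left _).add (hQ.mul_left _)
  refine (Summable.tsum_le_tsum hterm hLHS hRHS).trans ?_
  have hsum2 : ∑' j : ℕ, (E/((j:ℝ)+1)) * t^j / j.factorial = (E/t) * (Real.exp t - 1) := by
    rw [← tsum_pow_div_factorial_succ t, ← tsum_mul_left]
    apply tsum_congr
    intro j
    have hf : ((j+1).factorial : ℝ) = ((j:ℝ)+1) * j.factorial := by
      push_cast [Nat.factorial_succ]; ring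
    rw [hf]
    have hfac : (0:ℝ) < j.factorial := by positivity
    field_simp
    ring
  rw [Summable.tsum_add (hP.mul_left _) (hQ.mul_left _), tsum_mul_left, tsum_mul_left, tsum_mul_left,
    ← exp_tsum, hsum2]
  have hE1 : E * Real.exp t = 1 := by rw [hE, ← Real.exp_add]; simp
  have h4 : (E/t) * (Real.exp t - 1) = (1 - E)/t := by
    rw [div_mul_eq_mul_div, mul_sub, hE1, mul_one]
  rw [hE1, h4, ← hs2]
  have h5 : (s/2) * ((1-E)/s^2) = (1-E)/(2*s) := by
    field_simp
  rw [mul_one, h5, ← add_div, div_le_div_iff₀ (by positivity) hspos]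
  nlinarith

/-- For Poisson variables `X ~ Poi(λ)`, `X' ~ Poi(λ')` with `0 ≤ λ < λ'`,
`E√X' − E√X ≤ 2(√λ' − √λ)`. -/
theorem poisson_sqrt_mean_diff_le
    (lam lam' : ℝ) (h0 : 0 ≤ lam) (h : lam < lam') :
    (∑' k : ℕ, Real.sqrt k * (Real.exp (-lam') * lam' ^ k / k.factorial))
      - (∑' k : ℕ, Real.sqrt k * (Real.exp (-lam) * lam ^ k / k.factorial))
      ≤ 2 * (Real.sqrt lam' - Real.sqrt lam) := by
  set R := lam' + 1 with hRdef
  have hR : (1:ℝ) ≤ R := by linarith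
  set F : ℝ → ℝ := fun y => 2 * Real.sqrt y - ∑' k, fK k y with hF
  have hsub : Set.Icc lam lam' ⊆ Set.Ioo (-1:ℝ) R := fun x hx =>
    ⟨by have := hx.1; linarith, by have := hx.2; linarith⟩
  have hcont : ContinuousOn F (Set.Icc lam lam') := by
    apply ContinuousOn.sub
    · exact (continuous_const.mul Real.continuous_sqrt).continuousOn
    · intro x hx
      exact ((hasDerivAt_f hR (hsub hx)).continuousAt).continuousWithinAt
  have hmono : MonotoneOn F (Set.Icc lam lam') := by
    apply monotoneOn_of_hasDerivWithinAt_nonneg (convex_Icc _ _) hcont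
      (f' := fun x => 2 * (1/(2*Real.sqrt x)) - ∑' k, gK k x)
    · intro x hx
      rw [interior_Icc] at hx
      have hx0 : 0 < x := lt_of_le_of_lt h0 hx.1
      exact (((Real.hasDerivAt_sqrt hx0.ne').const_mul 2).sub
        (hasDerivAt_f hR (hsub (Set.mem_Icc.2 ⟨hx.1.le, hx.2.le⟩)))).hasDerivWithinAt
    · intro x hx
      rw [interior_Icc] at hx
      have hx0 : 0 < x := lt_of_le_of_lt h0 hx.1
      have hle := tsum_gK_le hx0
      have hsq : 0 < Real.sqrt x := Real.sqrt_pos.2 hx0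
      have he : 2 * (1/(2*Real.sqrt x)) = 1 / Real.sqrt x := by
        field_simp
      rw [he]
      linarith
  have hFF := hmono (Set.left_mem_Icc.2 h.le) (Set.right_mem_Icc.2 h.le) h.le
  have e1 : (∑' k : ℕ, Real.sqrt k * (Real.exp (-lam') * lam' ^ k / k.factorial))
      = ∑' k, fK k lam' := rfl
  have e2 : (∑' k : ℕ, Real.sqrt k * (Real.exp (-lam) * lam ^ k / k.factorial))
      = ∑' k, fK k lam := rfl
  have hFl : F lam = 2 * Real.sqrt lam - ∑' k, fK k lam := rfl
  have hFl' : F lam' = 2 * Real.sqrt lam' - ∑' k, fK k lam' := rfl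
  rw [e1, e2]
  rw [hFl, hFl'] at hFF
  linarith
end

section
/- Let n ∈ ℕ, p ∈ [0,1], and let X_n ~ Bin(n,p), X_{n+1} ~ Bin(n+1,p). Then E√(X_{n+1}) − E√(X_n) ≤ 2√p (√(n+1) − √n), where E√(X_N) = ∑_{k=0}^{N} √k · C(N,k) p^k (1−p)^{N−k}. -/
open Finset

private lemma bsm_sum_one (n : ℕ) (p : ℝ) :
    ∑ k ∈ range (n + 1), (n.choose k : ℝ) * p ^ k * (1 - p) ^ (n - k) = 1 := by
  have h := add_pow p (1 - p) n
  simp only [add_sub_cancel, one_pow] at h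
  calc ∑ k ∈ range (n + 1), (n.choose k : ℝ) * p ^ k * (1 - p) ^ (n - k)
      = ∑ k ∈ range (n + 1), p ^ k * (1 - p) ^ (n - k) * (n.choose k : ℝ) :=
        Finset.sum_congr rfl fun k _ => by ring
    _ = 1 := h.symm

private lemma bsm_identity (n : ℕ) (p : ℝ) :
    ∑ k ∈ range (n + 2),
        Real.sqrt k * (((n + 1).choose k : ℝ) * p ^ k * (1 - p) ^ (n + 1 - k))
      = (1 - p) * ∑ k ∈ range (n + 1),
            Real.sqrt k * ((n.choose k : ℝ) * p ^ k * (1 - p) ^ (n - k))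
        + p * ∑ k ∈ range (n + 1),
            Real.sqrt (k + 1) * ((n.choose k : ℝ) * p ^ k * (1 - p) ^ (n - k)) := by
  rw [Finset.sum_range_succ' _ (n + 1)]
  simp only [Nat.cast_zero, Real.sqrt_zero, zero_mul, add_zero]
  have hsplit : ∀ k ∈ range (n + 1),
      Real.sqrt (k + 1 : ℕ) * (((n + 1).choose (k + 1) : ℝ) * p ^ (k + 1) * (1 - p) ^ (n + 1 - (k + 1)))
      = Real.sqrt (k + 1) * ((n.choose (k + 1) : ℝ) * p ^ (k + 1) * (1 - p) ^ (n - k))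
        + p * (Real.sqrt (k + 1) * ((n.choose k : ℝ) * p ^ k * (1 - p) ^ (n - k))) := by
    intro k hk
    rw [Nat.choose_succ_succ, Nat.succ_sub_succ]
    push_cast
    ring
  rw [Finset.sum_congr rfl hsplit, Finset.sum_add_distrib, ← Finset.mul_sum]
  congr 1
  rw [Finset.sum_range_succ]
  simp only [Nat.choose_succ_self, Nat.cast_zero, zero_mul, mul_zero, add_zero]
  rw [Finset.sum_range_succ' (fun k => Real.sqrt k * ((n.choose k : ℝ) * p ^ k * (1 - p) ^ (n - k))) n]
  simp only [Nat.cast_zero, Real.sqrt_zero, zero_mul, add_zero]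
  rw [Finset.mul_sum]
  refine Finset.sum_congr rfl fun k hk => ?_
  have hk' : k < n := Finset.mem_range.mp hk
  have h1 : n - k = (n - (k + 1)) + 1 := by omega
  rw [h1]
  push_cast
  ring

private lemma bsm_sqrt_gap (k : ℕ) :
    Real.sqrt (k + 1) - Real.sqrt k ≤ 1 / Real.sqrt ((k : ℝ) + 1) := by
  have hpos : (0:ℝ) < Real.sqrt ((k:ℝ) + 1) := Real.sqrt_pos.mpr (by positivity)
  rw [le_div_iff₀ hpos]
  have h1 : Real.sqrt (k:ℝ) * Real.sqrt ((k:ℝ) + 1) = Real.sqrt ((k:ℝ) * ((k:ℝ)+1)) :=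
    (Real.sqrt_mul (Nat.cast_nonneg k) _).symm
  have h2 : (k:ℝ) ≤ Real.sqrt ((k:ℝ) * ((k:ℝ)+1)) := by
    have h := Real.sqrt_le_sqrt (show (k:ℝ)^2 ≤ (k:ℝ)*((k:ℝ)+1) by nlinarith)
    rwa [Real.sqrt_sq (Nat.cast_nonneg k)] at h
  have h3 : Real.sqrt ((k:ℝ)+1) * Real.sqrt ((k:ℝ)+1) = (k:ℝ) + 1 :=
    Real.mul_self_sqrt (by positivity)
  nlinarith

set_option maxHeartbeats 1000000 in
/-- For `X_n ~ Bin(n,p)`, `E√(X_{n+1}) − E√(X_n) ≤ 2√p (√(n+1) − √n)`. -/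
theorem binomial_sqrt_mean_diff_le (n : ℕ) (p : ℝ) (hp0 : 0 ≤ p) (hp1 : p ≤ 1) :
    (∑ k ∈ Finset.range (n + 2),
        Real.sqrt k * (((n + 1).choose k : ℝ) * p ^ k * (1 - p) ^ (n + 1 - k)))
      - (∑ k ∈ Finset.range (n + 1),
          Real.sqrt k * ((n.choose k : ℝ) * p ^ k * (1 - p) ^ (n - k)))
      ≤ 2 * Real.sqrt p * (Real.sqrt ((n : ℝ) + 1) - Real.sqrt n) := by
  have hq0 : (0:ℝ) ≤ 1 - p := by linarith
  set w : ℕ → ℝ := fun k => (n.choose k : ℝ) * p ^ k * (1 - p) ^ (n - k) with hw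
  have hwdef : ∀ k, (n.choose k : ℝ) * p ^ k * (1 - p) ^ (n - k) = w k := fun k => rfl
  have hwnn : ∀ k, 0 ≤ w k := fun k => by
    rw [← hwdef]; positivity
  have hid := bsm_identity n p
  simp only [hwdef] at hid
  -- Step 1: the difference equals p * ∑ (√(k+1) - √k) * w k
  have e : ∑ k ∈ range (n+1), (Real.sqrt ((k:ℝ) + 1) - Real.sqrt k) * w k
      = (∑ k ∈ range (n+1), Real.sqrt ((k:ℝ)+1) * w k)
        - ∑ k ∈ range (n+1), Real.sqrt k * w k := by
    rw [← Finset.sum_sub_distrib]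
    exact Finset.sum_congr rfl fun k _ => by ring
  have hdiff : (∑ k ∈ Finset.range (n + 2),
        Real.sqrt k * (((n + 1).choose k : ℝ) * p ^ k * (1 - p) ^ (n + 1 - k)))
      - (∑ k ∈ Finset.range (n + 1), Real.sqrt k * w k)
      = p * ∑ k ∈ range (n + 1), (Real.sqrt ((k:ℝ) + 1) - Real.sqrt k) * w k := by
    rw [hid, e]; ring
  rw [hdiff]
  -- Step 2: termwise bound
  set C : ℝ := ∑ k ∈ range (n+1), (1 / Real.sqrt ((k:ℝ)+1)) * w k with hCdef
  have step2 : ∑ k ∈ range (n+1), (Real.sqrt ((k:ℝ) + 1) - Real.sqrt k) * w k ≤ C :=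
    Finset.sum_le_sum fun k _ => mul_le_mul_of_nonneg_right (bsm_sqrt_gap k) (hwnn k)
  have hC0 : 0 ≤ C := Finset.sum_nonneg fun k _ => mul_nonneg (by positivity) (hwnn k)
  -- Step 3: Cauchy-Schwarz
  set B : ℝ := ∑ k ∈ range (n+1), w k / ((k:ℝ)+1) with hBdef
  have hcs : C^2 ≤ B := by
    have cs := Finset.sum_mul_sq_le_sq_mul_sq (range (n+1))
      (fun k => Real.sqrt (w k)) (fun k => Real.sqrt (w k) / Real.sqrt ((k:ℝ)+1))
    have e1 : ∑ k ∈ range (n+1),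
        Real.sqrt (w k) * (Real.sqrt (w k) / Real.sqrt ((k:ℝ)+1)) = C := by
      rw [hCdef]
      refine Finset.sum_congr rfl fun k _ => ?_
      have hm : Real.sqrt (w k) * Real.sqrt (w k) = w k := Real.mul_self_sqrt (hwnn k)
      rw [mul_div_assoc', hm]
      ring
    have e2 : ∑ k ∈ range (n+1), Real.sqrt (w k) ^ 2 = 1 := by
      rw [show ∑ k ∈ range (n+1), Real.sqrt (w k) ^ 2 = ∑ k ∈ range (n+1), w k from
        Finset.sum_congr rfl fun k _ => Real.sq_sqrt (hwnn k)]
      simp only [← hwdef]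
      exact bsm_sum_one n p
    have e3 : ∑ k ∈ range (n+1), (Real.sqrt (w k) / Real.sqrt ((k:ℝ)+1)) ^ 2 = B := by
      rw [hBdef]
      refine Finset.sum_congr rfl fun k _ => ?_
      rw [div_pow, Real.sq_sqrt (hwnn k), Real.sq_sqrt (by positivity : (0:ℝ) ≤ (k:ℝ)+1)]
    rw [e1, e2, e3, one_mul] at cs
    exact cs
  -- Step 4: p * B ≤ 1/(n+1)
  have hA : ∑ k ∈ range (n+1), ((n+1).choose (k+1):ℝ) * p^(k+1) * (1-p)^(n-k) ≤ 1 := by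
    have h1 := bsm_sum_one (n+1) p
    rw [Finset.sum_range_succ' _ (n+1)] at h1
    simp only [Nat.succ_sub_succ, Nat.choose_zero_right, Nat.cast_one, one_mul, pow_zero,
      Nat.sub_zero] at h1
    have hqpow : (0:ℝ) ≤ (1-p)^(n+1) := by positivity
    linarith
  have hpB : p * B ≤ 1/((n:ℝ)+1) := by
    have hn1 : ((n:ℝ)+1) ≠ 0 := by positivity
    have heq : p * B = (∑ k ∈ range (n+1),
        ((n+1).choose (k+1):ℝ) * p^(k+1) * (1-p)^(n-k)) / ((n:ℝ)+1) := by
      rw [hBdef, Finset.mul_sum, Finset.sum_div]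
      refine Finset.sum_congr rfl fun k _ => ?_
      have hc := Nat.add_one_mul_choose_eq n k
      have hc' : ((n:ℝ)+1) * (n.choose k : ℝ) = ((n+1).choose (k+1):ℝ) * ((k:ℝ)+1) := by
        exact_mod_cast congrArg (Nat.cast : ℕ → ℝ) hc
      have hk1 : ((k:ℝ)+1) ≠ 0 := by positivity
      rw [← hwdef]
      field_simp
      linear_combination (p * p^k * (1-p)^(n-k)) * hc'
    rw [heq, div_le_div_iff₀ (by positivity) (by positivity)]
    nlinarith [hA]
  have hB0 : 0 ≤ B := Finset.sum_nonneg fun k _ => div_nonneg (hwnn k) (by positivity)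
  -- Step 5: combine
  have h5 : (p*C)^2 ≤ p/((n:ℝ)+1) := by
    calc (p*C)^2 = p*(p*C^2) := by ring
      _ ≤ p*(p*B) := by
          apply mul_le_mul_of_nonneg_left (mul_le_mul_of_nonneg_left hcs hp0) hp0
      _ ≤ p*(1/((n:ℝ)+1)) := mul_le_mul_of_nonneg_left hpB hp0
      _ = p/((n:ℝ)+1) := by ring
  have h6 : p*C ≤ Real.sqrt p / Real.sqrt ((n:ℝ)+1) := by
    rw [← Real.sqrt_div hp0]
    exact (Real.le_sqrt (mul_nonneg hp0 hC0) (by positivity)).mpr h5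
  -- Step 6: final elementary inequality
  have hfin : Real.sqrt p / Real.sqrt ((n:ℝ)+1)
      ≤ 2 * Real.sqrt p * (Real.sqrt ((n:ℝ)+1) - Real.sqrt n) := by
    have spos : (0:ℝ) < Real.sqrt ((n:ℝ)+1) := Real.sqrt_pos.mpr (by positivity)
    have sp : (0:ℝ) ≤ Real.sqrt p := Real.sqrt_nonneg p
    rw [div_le_iff₀ spos]
    have h1 : Real.sqrt (n:ℝ) * Real.sqrt ((n:ℝ) + 1) = Real.sqrt ((n:ℝ) * ((n:ℝ)+1)) :=
      (Real.sqrt_mul (Nat.cast_nonneg n) _).symm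
    have h3 : Real.sqrt ((n:ℝ)*((n:ℝ)+1)) ≤ (n:ℝ) + 1/2 := by
      have h := Real.sqrt_le_sqrt (show (n:ℝ)*((n:ℝ)+1) ≤ ((n:ℝ)+1/2)^2 by nlinarith)
      rwa [Real.sqrt_sq (by positivity)] at h
    have h4 : Real.sqrt ((n:ℝ)+1) * Real.sqrt ((n:ℝ)+1) = (n:ℝ) + 1 :=
      Real.mul_self_sqrt (by positivity)
    have key : 1 ≤ 2 * (Real.sqrt ((n:ℝ)+1) - Real.sqrt n) * Real.sqrt ((n:ℝ)+1) := by
      nlinarith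
    nlinarith
  calc p * ∑ k ∈ range (n + 1), (Real.sqrt ((k:ℝ) + 1) - Real.sqrt k) * w k
      ≤ p * C := mul_le_mul_of_nonneg_left step2 hp0
    _ ≤ Real.sqrt p / Real.sqrt ((n:ℝ)+1) := h6
    _ ≤ 2 * Real.sqrt p * (Real.sqrt ((n:ℝ)+1) - Real.sqrt n) := hfin
end

section
/- Let p₀ < 1. There exists a constant K < ∞ such that for all positive integers n, m and all p ∈ [0, p₀], d_TV(Bin(n,p), Bin(m,p)) ≤ K |√n − √m|, where d_TV(Bin(n,p),Bin(m,p)) = (1/2) ∑_{k∈ℕ} |f(k;n,p) − f(k;m,p)| and f(k;N,p) = C(N,k) p^k (1−p)^{N−k} for 0 ≤ k ≤ N and f(k;N,p) = 0 otherwise. -/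
open Real Finset

/-- The probability mass function of the binomial distribution `Bin(N,p)`,
extended by `0` outside `{0,…,N}` (note `N.choose k = 0` for `k > N`). -/
noncomputable def binPMF (N : ℕ) (p : ℝ) (k : ℕ) : ℝ :=
  (N.choose k : ℝ) * p ^ k * (1 - p) ^ (N - k)

lemma stirl_mem (n : ℕ) (hn : 1 ≤ n) :
    Real.sqrt π ≤ Stirling.stirlingSeq n ∧ Stirling.stirlingSeq n ≤ Real.exp 1 / Real.sqrt 2 := by
  obtain ⟨m, rfl⟩ := Nat.exists_eq_succ_of_ne_zero (by omega : n ≠ 0)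
  constructor
  · have h1 := Stirling.stirlingSeq'_antitone.le_of_tendsto
      (Stirling.tendsto_stirlingSeq_sqrt_pi.comp (Filter.tendsto_add_atTop_nat 1)) m
    simpa [Function.comp, Nat.succ_eq_add_one, Nat.add_comm] using h1
  · have h1 : Stirling.stirlingSeq (m+1) ≤ Stirling.stirlingSeq (0+1) :=
      Stirling.stirlingSeq'_antitone (Nat.zero_le m)
    rw [show (0+1 : ℕ) = 1 by rfl, Stirling.stirlingSeq_one] at h1
    simpa using h1

lemma fact_lower (n : ℕ) (hn : 1 ≤ n) :
    2 * Real.sqrt n * ((n:ℝ) / Real.exp 1) ^ n ≤ (n.factorial : ℝ) := by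
  have h1 := (stirl_mem n hn).1
  have hs : Stirling.stirlingSeq n = (n.factorial : ℝ) / (Real.sqrt (2*n) * ((n:ℝ)/Real.exp 1)^n) := rfl
  have hn' : (1:ℝ) ≤ n := by exact_mod_cast hn
  have hpos : 0 < Real.sqrt (2*(n:ℝ)) * ((n:ℝ)/Real.exp 1)^n := by positivity
  rw [hs, le_div_iff₀ hpos] at h1
  have h2 : Real.sqrt (2*(n:ℝ)) = Real.sqrt 2 * Real.sqrt n := Real.sqrt_mul (by norm_num) _
  have h3 : (2:ℝ) ≤ Real.sqrt π * Real.sqrt 2 := by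
    rw [← Real.sqrt_mul Real.pi_pos.le]
    nlinarith [Real.sq_sqrt (show (0:ℝ) ≤ π*2 by positivity), Real.sqrt_nonneg (π*2), Real.pi_gt_three]
  have hp : (0:ℝ) ≤ ((n:ℝ)/Real.exp 1)^n := by positivity
  have hsq : (0:ℝ) ≤ Real.sqrt n := Real.sqrt_nonneg _
  calc 2 * Real.sqrt n * ((n:ℝ) / Real.exp 1) ^ n
      ≤ (Real.sqrt π * Real.sqrt 2) * Real.sqrt n * ((n:ℝ)/Real.exp 1)^n := by
        have := mul_le_mul_of_nonneg_right (mul_le_mul_of_nonneg_right h3 hsq) hp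
        linarith
    _ = Real.sqrt π * (Real.sqrt (2*(n:ℝ)) * ((n:ℝ)/Real.exp 1)^n) := by rw [h2]; ring
    _ ≤ n.factorial := h1

lemma fact_upper (n : ℕ) (hn : 1 ≤ n) :
    (n.factorial : ℝ) ≤ 3 * Real.sqrt n * ((n:ℝ) / Real.exp 1) ^ n := by
  have h1 := (stirl_mem n hn).2
  have hs : Stirling.stirlingSeq n = (n.factorial : ℝ) / (Real.sqrt (2*n) * ((n:ℝ)/Real.exp 1)^n) := rfl
  have hn' : (1:ℝ) ≤ n := by exact_mod_cast hn
  have hpos : 0 < Real.sqrt (2*(n:ℝ)) * ((n:ℝ)/Real.exp 1)^n := by positivity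
  rw [hs, div_le_iff₀ hpos] at h1
  have h2 : Real.sqrt (2*(n:ℝ)) = Real.sqrt 2 * Real.sqrt n := Real.sqrt_mul (by norm_num) _
  have he : Real.exp 1 ≤ 3 := by nlinarith [Real.exp_one_lt_d9]
  have h3 : (0:ℝ) < Real.sqrt 2 := by positivity
  have hp : (0:ℝ) ≤ ((n:ℝ)/Real.exp 1)^n := by positivity
  have hsq : (0:ℝ) ≤ Real.sqrt n := Real.sqrt_nonneg _
  calc (n.factorial:ℝ) ≤ Real.exp 1 / Real.sqrt 2 * (Real.sqrt (2*(n:ℝ)) * ((n:ℝ)/Real.exp 1)^n) := h1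
    _ = Real.exp 1 * Real.sqrt n * ((n:ℝ)/Real.exp 1)^n := by rw [h2]; field_simp
    _ ≤ 3 * Real.sqrt n * ((n:ℝ)/Real.exp 1)^n := by
        have := mul_le_mul_of_nonneg_right (mul_le_mul_of_nonneg_right he hsq) hp
        linarith

lemma aux_pow_exp (c : ℝ) (hc : 0 ≤ c) (a : ℕ) : c^a ≤ (a:ℝ)^a * Real.exp (c - a) := by
  rcases Nat.eq_zero_or_pos a with rfl | ha
  · simp [Real.one_le_exp (by simpa using hc)]
  · have ha' : (0:ℝ) < a := by exact_mod_cast ha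
    have h1 : c / a ≤ Real.exp (c/a - 1) := by linarith [Real.add_one_le_exp (c/a - 1)]
    have h2 : (c/a)^a ≤ (Real.exp (c/a -1))^a :=
      pow_le_pow_left₀ (by positivity) h1 a
    rw [← Real.exp_nat_mul] at h2
    have h3 : (c/a)^a = c^a / (a:ℝ)^a := div_pow c _ a
    rw [h3, div_le_iff₀ (by positivity)] at h2
    calc c^a ≤ Real.exp (a * (c/a - 1)) * (a:ℝ)^a := h2
      _ = (a:ℝ)^a * Real.exp (c - a) := by
          rw [mul_comm]; congr 1; field_simp

lemma key_ineq_s7 (a b : ℕ) (p : ℝ) (hp : 0 ≤ p) (hq : p ≤ 1) :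
    ((a+b:ℕ):ℝ)^(a+b) * p^a * (1-p)^b ≤ (a:ℝ)^a * (b:ℝ)^b := by
  set j : ℝ := ((a+b:ℕ):ℝ) with hj
  have hj' : j = a + b := by push_cast [hj]; ring
  have h1 : (j*p)^a ≤ (a:ℝ)^a * Real.exp (j*p - a) :=
    aux_pow_exp _ (by positivity) a
  have h2 : (j*(1-p))^b ≤ (b:ℝ)^b * Real.exp (j*(1-p) - b) := by
    have : (0:ℝ) ≤ j * (1-p) := by
      have : (0:ℝ) ≤ j := by positivity
      nlinarith
    exact aux_pow_exp _ this b
  have hb : (0:ℝ) ≤ j * (1-p) := by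
    have : (0:ℝ) ≤ j := by positivity
    nlinarith
  have hmul := mul_le_mul h1 h2 (by positivity) (by positivity)
  have key : (j*p)^a * (j*(1-p))^b = j^(a+b) * p^a * (1-p)^b := by
    rw [mul_pow, mul_pow, pow_add]; ring
  have hexp : Real.exp (j*p - a) * Real.exp (j*(1-p) - b) = 1 := by
    rw [← Real.exp_add, show j*p - a + (j*(1-p) - b) = 0 by rw [hj']; ring, Real.exp_zero]
  calc j^(a+b) * p^a * (1-p)^b = (j*p)^a * (j*(1-p))^b := key.symm
    _ ≤ (a:ℝ)^a * Real.exp (j*p - a) * ((b:ℝ)^b * Real.exp (j*(1-p) - b)) := hmul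
    _ = (a:ℝ)^a * (b:ℝ)^b * (Real.exp (j*p - a) * Real.exp (j*(1-p) - b)) := by ring
    _ = (a:ℝ)^a * (b:ℝ)^b := by rw [hexp, mul_one]


lemma pmf_stirling (j k : ℕ) (hk : 1 ≤ k) (hkj : k + 1 ≤ j) (p : ℝ)
    (hp : 0 ≤ p) (hq : p ≤ 1) :
    binPMF j p k ≤ Real.sqrt j / (Real.sqrt k * Real.sqrt ((j - k : ℕ))) := by
  set a := k with ha
  set b := j - k with hb
  have hjab : j = a + b := by omega
  have hb1 : 1 ≤ b := by omega
  have hchoose : ((j.choose k : ℕ):ℝ) * (a.factorial : ℝ) * (b.factorial : ℝ) = (j.factorial : ℝ) := by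
    rw [ha, hb]
    exact_mod_cast congrArg (Nat.cast (R := ℝ)) (Nat.choose_mul_factorial_mul_factorial (by omega : k ≤ j))
  have hfa : 2 * Real.sqrt a * ((a:ℝ) / Real.exp 1) ^ a ≤ (a.factorial : ℝ) := fact_lower a hk
  have hfb : 2 * Real.sqrt b * ((b:ℝ) / Real.exp 1) ^ b ≤ (b.factorial : ℝ) := fact_lower b hb1
  have hfj : (j.factorial : ℝ) ≤ 3 * Real.sqrt j * ((j:ℝ) / Real.exp 1) ^ j := fact_upper j (by omega)
  -- binPMF * a! * b! = j! * p^a * q^b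
  have hpmf : binPMF j p k * (a.factorial : ℝ) * (b.factorial : ℝ)
      = (j.factorial : ℝ) * (p ^ a * (1-p) ^ b) := by
    unfold binPMF; rw [← hchoose]; ring
  -- numerator bound
  have hnum : (j.factorial : ℝ) * (p ^ a * (1-p) ^ b)
      ≤ 3 * Real.sqrt j * (((a:ℝ)/Real.exp 1) ^ a * ((b:ℝ)/Real.exp 1) ^ b) := by
    have h1 : (j.factorial : ℝ) * (p ^ a * (1-p) ^ b)
        ≤ 3 * Real.sqrt j * ((j:ℝ) / Real.exp 1) ^ j * (p ^ a * (1-p) ^ b) := by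
      have hnn : (0:ℝ) ≤ p ^ a * (1-p) ^ b := mul_nonneg (pow_nonneg hp a) (pow_nonneg (by linarith) b)
      exact mul_le_mul_of_nonneg_right hfj hnn
    have h2 : ((j:ℝ) / Real.exp 1) ^ j * (p ^ a * (1-p) ^ b)
        ≤ ((a:ℝ)/Real.exp 1) ^ a * ((b:ℝ)/Real.exp 1) ^ b := by
      have he : (0:ℝ) < Real.exp 1 := Real.exp_pos 1
      have hkey := key_ineq_s7 a b p hp hq
      rw [← hjab] at hkey
      have hsplit : ((j:ℝ) / Real.exp 1) ^ j = (j:ℝ)^j / (Real.exp 1)^j := div_pow _ _ _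
      have hsplit2 : ((a:ℝ)/Real.exp 1) ^ a * ((b:ℝ)/Real.exp 1) ^ b
          = (a:ℝ)^a * (b:ℝ)^b / (Real.exp 1)^j := by
        rw [div_pow, div_pow, div_mul_div_comm, ← pow_add, ← hjab]
      rw [hsplit, hsplit2, div_mul_eq_mul_div, div_le_div_iff₀ (by positivity) (by positivity)]
      calc (j:ℝ)^j * (p^a * (1-p)^b) * (Real.exp 1)^j
          = ((j:ℝ)^j * p^a * (1-p)^b) * (Real.exp 1)^j := by ring
        _ ≤ (a:ℝ)^a * (b:ℝ)^b * (Real.exp 1)^j := by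
            have : (0:ℝ) ≤ (Real.exp 1)^j := by positivity
            apply mul_le_mul_of_nonneg_right _ this
            have := hkey
            rw [hjab]; rw [hjab] at this; exact_mod_cast this
    have h3 : (0:ℝ) ≤ 3 * Real.sqrt j := by positivity
    calc (j.factorial : ℝ) * (p ^ a * (1-p) ^ b)
        ≤ 3 * Real.sqrt j * ((j:ℝ) / Real.exp 1) ^ j * (p ^ a * (1-p) ^ b) := h1
      _ = 3 * Real.sqrt j * (((j:ℝ) / Real.exp 1) ^ j * (p ^ a * (1-p) ^ b)) := by ring
      _ ≤ 3 * Real.sqrt j * (((a:ℝ)/Real.exp 1) ^ a * ((b:ℝ)/Real.exp 1) ^ b) :=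
          mul_le_mul_of_nonneg_left h2 h3
  -- denominator bound and conclusion
  have hda : (0:ℝ) < (a.factorial : ℝ) := by exact_mod_cast a.factorial_pos
  have hdb : (0:ℝ) < (b.factorial : ℝ) := by exact_mod_cast b.factorial_pos
  have hsa : (0:ℝ) < Real.sqrt a := Real.sqrt_pos.2 (by exact_mod_cast hk)
  have hsb : (0:ℝ) < Real.sqrt b := Real.sqrt_pos.2 (by exact_mod_cast hb1)
  have hpa : (0:ℝ) < ((a:ℝ)/Real.exp 1) ^ a := by positivity
  have hpb : (0:ℝ) < ((b:ℝ)/Real.exp 1) ^ b := by positivity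
  -- binPMF ≤ hnum / (a! b!) ≤ hnum / (2√a Pa * 2√b Pb) ≤ √j/(√a√b)
  have step1 : binPMF j p k ≤ 3 * Real.sqrt j * (((a:ℝ)/Real.exp 1) ^ a * ((b:ℝ)/Real.exp 1) ^ b)
      / ((a.factorial : ℝ) * (b.factorial : ℝ)) := by
    rw [le_div_iff₀ (by positivity)]
    calc binPMF j p k * ((a.factorial : ℝ) * (b.factorial : ℝ))
        = binPMF j p k * (a.factorial : ℝ) * (b.factorial : ℝ) := by ring
      _ = (j.factorial : ℝ) * (p ^ a * (1-p) ^ b) := hpmf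
      _ ≤ _ := hnum
  have step2 : 3 * Real.sqrt j * (((a:ℝ)/Real.exp 1) ^ a * ((b:ℝ)/Real.exp 1) ^ b)
      / ((a.factorial : ℝ) * (b.factorial : ℝ))
      ≤ Real.sqrt j / (Real.sqrt a * Real.sqrt b) := by
    rw [div_le_div_iff₀ (by positivity) (by positivity)]
    have hfab : (2 * Real.sqrt a * ((a:ℝ)/Real.exp 1) ^ a) * (2 * Real.sqrt b * ((b:ℝ)/Real.exp 1) ^ b)
        ≤ (a.factorial : ℝ) * (b.factorial : ℝ) :=
      mul_le_mul hfa hfb (by positivity) hda.le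
    have hsj : (0:ℝ) ≤ Real.sqrt j := Real.sqrt_nonneg _
    nlinarith [mul_nonneg (mul_nonneg hsj hpa.le) hpb.le, mul_pos hsa hsb,
      mul_le_mul_of_nonneg_left hfab hsj]
  exact step1.trans step2

lemma binPMF_nonneg {N k : ℕ} {p : ℝ} (hp : 0 ≤ p) (hq : p ≤ 1) : 0 ≤ binPMF N p k := by
  unfold binPMF
  have : (0:ℝ) ≤ 1 - p := by linarith
  positivity

lemma binPMF_zero {N k : ℕ} {p : ℝ} (h : N < k) : binPMF N p k = 0 := by
  unfold binPMF
  rw [Nat.choose_eq_zero_of_lt h]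
  simp

lemma sum_binPMF (N : ℕ) (p : ℝ) : ∑ k ∈ range (N+1), binPMF N p k = 1 := by
  have h := add_pow p (1-p) N
  rw [show p + (1-p) = 1 by ring, one_pow] at h
  rw [h]
  apply Finset.sum_congr rfl
  intro k _
  unfold binPMF; ring

lemma binPMF_le_one {N k : ℕ} {p : ℝ} (hp : 0 ≤ p) (hq : p ≤ 1) : binPMF N p k ≤ 1 := by
  rcases le_or_gt k N with h | h
  · rw [← sum_binPMF N p]
    exact Finset.single_le_sum (f := fun i => binPMF N p i) (fun i _ => binPMF_nonneg hp hq)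
      (Finset.mem_range.2 (Nat.lt_succ_of_le h))
  · rw [binPMF_zero h]; norm_num

-- monotone up to mode
lemma binPMF_mono_up {j k : ℕ} {p : ℝ} (hp : 0 ≤ p) (hq : p < 1)
    (h : ((k:ℝ)+1) ≤ ((j:ℝ)+1) * p) : binPMF j p k ≤ binPMF j p (k+1) := by
  have hkj : k + 1 ≤ j := by
    by_contra hc
    push_neg at hc
    have : ((j:ℝ)+1) * p < (j:ℝ) + 1 := by
      have : (0:ℝ) < (j:ℝ)+1 := by positivity
      nlinarith
    have hjk : (j:ℝ) + 1 ≤ (k:ℝ) + 1 := by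
      have : j ≤ k := by omega
      exact_mod_cast add_le_add_left (Nat.cast_le.2 this) 1
    linarith
  have hid : ((j.choose (k+1) : ℕ):ℝ) * (k+1) = ((j.choose k : ℕ):ℝ) * ((j:ℝ) - k) := by
    have := Nat.add_one_mul_choose_eq j k
    have h2 : (j.choose (k+1)) * (k+1) = j.choose k * (j - k) := Nat.choose_succ_right_eq j k
    have h3 : ((j.choose (k+1)) * (k+1) : ℕ) = (j.choose k * (j - k) : ℕ) := h2
    have := congrArg (Nat.cast (R := ℝ)) h3
    push_cast [Nat.cast_sub (by omega : k ≤ j)] at this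
    convert this using 2 <;> push_cast <;> ring_nf
  -- (k+1)(1-p) ≤ (j-k)p
  have hineq : ((k:ℝ)+1) * (1-p) ≤ ((j:ℝ)-k) * p := by nlinarith
  -- exponent: j - k = (j - (k+1)) + 1
  have hexp : (1-p)^(j-k) = (1-p) * (1-p)^(j-(k+1)) := by
    rw [show j - k = (j - (k+1)) + 1 by omega, pow_succ]; ring
  unfold binPMF
  rw [hexp]
  have hk1 : (0:ℝ) < (k:ℝ) + 1 := by positivity
  rw [← mul_le_mul_iff_of_pos_right hk1]
  have hq1 : (0:ℝ) ≤ 1 - p := by linarith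
  have hnn : (0:ℝ) ≤ ((j.choose k:ℕ):ℝ) * p^k * (1-p)^(j-(k+1)) := by positivity
  calc ((j.choose k:ℕ):ℝ) * p^k * ((1-p) * (1-p)^(j-(k+1))) * ((k:ℝ)+1)
      = (((j.choose k:ℕ):ℝ) * p^k * (1-p)^(j-(k+1))) * (((k:ℝ)+1) * (1-p)) := by ring
    _ ≤ (((j.choose k:ℕ):ℝ) * p^k * (1-p)^(j-(k+1))) * (((j:ℝ)-k) * p) :=
        mul_le_mul_of_nonneg_left hineq hnn
    _ = (((j.choose k:ℕ):ℝ) * ((j:ℝ)-k)) * p^(k+1) * (1-p)^(j-(k+1)) := by ring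
    _ = (((j.choose (k+1):ℕ):ℝ) * ((k:ℝ)+1)) * p^(k+1) * (1-p)^(j-(k+1)) := by rw [← hid]
    _ = ((j.choose (k+1):ℕ):ℝ) * p^(k+1) * (1-p)^(j-(k+1)) * ((k:ℝ)+1) := by ring

-- antitone after mode
lemma binPMF_mono_down {j k : ℕ} {p : ℝ} (hp : 0 ≤ p) (hq : p ≤ 1)
    (h : ((j:ℝ)+1) * p ≤ ((k:ℝ)+1)) : binPMF j p (k+1) ≤ binPMF j p k := by
  rcases le_or_gt (k+1) j with hkj | hkj
  swap
  · rw [binPMF_zero hkj]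
    exact binPMF_nonneg hp hq
  have hid : ((j.choose (k+1) : ℕ):ℝ) * (k+1) = ((j.choose k : ℕ):ℝ) * ((j:ℝ) - k) := by
    have h3 : ((j.choose (k+1)) * (k+1) : ℕ) = (j.choose k * (j - k) : ℕ) := Nat.choose_succ_right_eq j k
    have := congrArg (Nat.cast (R := ℝ)) h3
    push_cast [Nat.cast_sub (by omega : k ≤ j)] at this
    convert this using 2 <;> push_cast <;> ring_nf
  have hineq : ((j:ℝ)-k) * p ≤ ((k:ℝ)+1) * (1-p) := by nlinarith
  have hexp : (1-p)^(j-k) = (1-p) * (1-p)^(j-(k+1)) := by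
    rw [show j - k = (j - (k+1)) + 1 by omega, pow_succ]; ring
  unfold binPMF
  rw [hexp]
  have hk1 : (0:ℝ) < (k:ℝ) + 1 := by positivity
  rw [← mul_le_mul_iff_of_pos_right hk1]
  have hq1 : (0:ℝ) ≤ 1 - p := by linarith
  have hnn : (0:ℝ) ≤ ((j.choose k:ℕ):ℝ) * p^k * (1-p)^(j-(k+1)) := by positivity
  calc ((j.choose (k+1):ℕ):ℝ) * p^(k+1) * (1-p)^(j-(k+1)) * ((k:ℝ)+1)
      = (((j.choose (k+1):ℕ):ℝ) * ((k:ℝ)+1)) * p^(k+1) * (1-p)^(j-(k+1)) := by ring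
    _ = (((j.choose k:ℕ):ℝ) * ((j:ℝ)-k)) * p^(k+1) * (1-p)^(j-(k+1)) := by rw [hid]
    _ = (((j.choose k:ℕ):ℝ) * p^k * (1-p)^(j-(k+1))) * (((j:ℝ)-k) * p) := by ring
    _ ≤ (((j.choose k:ℕ):ℝ) * p^k * (1-p)^(j-(k+1))) * (((k:ℝ)+1) * (1-p)) :=
        mul_le_mul_of_nonneg_left hineq hnn
    _ = ((j.choose k:ℕ):ℝ) * p^k * ((1-p) * (1-p)^(j-(k+1))) * ((k:ℝ)+1) := by ring

lemma binPMF_succ_zero (j : ℕ) (p : ℝ) : binPMF (j+1) p 0 = (1-p) * binPMF j p 0 := by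
  unfold binPMF
  simp [pow_succ]
  ring

lemma binPMF_succ (j k : ℕ) (p : ℝ) :
    binPMF (j+1) p (k+1) = (1-p) * binPMF j p (k+1) + p * binPMF j p k := by
  unfold binPMF
  rw [Nat.choose_succ_succ' j k]
  push_cast
  rcases le_or_gt (k+1) j with h | h
  · rw [show j - k = (j - (k+1)) + 1 by omega, pow_succ]
    ring
  · rw [Nat.choose_eq_zero_of_lt h]
    rcases le_or_gt k j with h2 | h2
    · have : k = j := by omega
      subst this
      simp
      ring
    · rw [Nat.choose_eq_zero_of_lt h2]
      ring

lemma tele (f : ℕ → ℝ) {a b : ℕ} (h : a ≤ b) :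
    ∑ k ∈ Finset.Ico a b, (f (k+1) - f k) = f b - f a := by
  induction b, h using Nat.le_induction with
  | base => simp
  | succ b hb ih => rw [Finset.sum_Ico_succ_top (by omega), ih]; ring

lemma abs_sum_unimodal (s : ℕ → ℝ) (K R : ℕ) (hKR : K ≤ R) (hnn : ∀ i, 0 ≤ s i)
    (hmono : ∀ k, k < K → s k ≤ s (k+1)) (hanti : ∀ k, K ≤ k → s (k+1) ≤ s k) :
    s 0 + ∑ k ∈ range R, |s (k+1) - s k| ≤ 2 * s K := by
  have hsplit : ∑ k ∈ range R, |s (k+1) - s k|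
      = ∑ k ∈ Finset.Ico 0 K, |s (k+1) - s k| + ∑ k ∈ Finset.Ico K R, |s (k+1) - s k| := by
    rw [Finset.range_eq_Ico, ← Finset.sum_Ico_consecutive _ (Nat.zero_le K) hKR]
  have e1 : ∑ k ∈ Finset.Ico 0 K, |s (k+1) - s k| = s K - s 0 := by
    rw [Finset.sum_congr rfl (fun k hk => abs_of_nonneg
      (by linarith [hmono k (Finset.mem_Ico.1 hk).2]))]
    exact tele s (Nat.zero_le K)
  have e2 : ∑ k ∈ Finset.Ico K R, |s (k+1) - s k| = s K - s R := by
    have h1 : ∑ k ∈ Finset.Ico K R, |s (k+1) - s k| = ∑ k ∈ Finset.Ico K R, -(s (k+1) - s k) := by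
      apply Finset.sum_congr rfl
      intro k hk
      rw [abs_of_nonpos (by linarith [hanti k (Finset.mem_Ico.1 hk).1])]
    rw [h1, Finset.sum_neg_distrib, tele s hKR]
    ring
  rw [hsplit, e1, e2]
  linarith [hnn R]

lemma onestep (j R : ℕ) (hR : j + 1 ≤ R) (p : ℝ) (hp : 0 ≤ p) (hq : p < 1) :
    ∑ k ∈ range (R+1), |binPMF (j+1) p k - binPMF j p k|
      ≤ 2 * p * binPMF j p (⌊((j:ℝ)+1) * p⌋₊) := by
  have hq1 : p ≤ 1 := hq.le
  have hnn : ∀ i, 0 ≤ binPMF j p i := fun i => binPMF_nonneg hp hq1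
  have hfloor_le : ((⌊((j:ℝ)+1) * p⌋₊ : ℕ):ℝ) ≤ ((j:ℝ)+1) * p := Nat.floor_le (by positivity)
  have hfloor_lt : ((j:ℝ)+1) * p < (⌊((j:ℝ)+1) * p⌋₊ : ℝ) + 1 := Nat.lt_floor_add_one _
  have hkstR : ⌊((j:ℝ)+1) * p⌋₊ ≤ R := by
    have h1 : ((j:ℝ)+1) * p < (j:ℝ) + 1 := by
      have : (0:ℝ) < (j:ℝ) + 1 := by positivity
      nlinarith
    have h2 : (⌊((j:ℝ)+1) * p⌋₊:ℝ) < ((j+1:ℕ):ℝ) := by push_cast; linarith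
    have : ⌊((j:ℝ)+1) * p⌋₊ < j + 1 := by exact_mod_cast h2
    omega
  have hsum : ∑ k ∈ range (R+1), |binPMF (j+1) p k - binPMF j p k|
      = p * (binPMF j p 0 + ∑ k ∈ range R, |binPMF j p (k+1) - binPMF j p k|) := by
    rw [Finset.sum_range_succ']
    have h0 : |binPMF (j+1) p 0 - binPMF j p 0| = p * binPMF j p 0 := by
      rw [binPMF_succ_zero,
        show (1-p) * binPMF j p 0 - binPMF j p 0 = -(p * binPMF j p 0) by ring, abs_neg,
        abs_of_nonneg (mul_nonneg hp (hnn 0))]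
    have h1 : ∀ k, |binPMF (j+1) p (k+1) - binPMF j p (k+1)|
        = p * |binPMF j p (k+1) - binPMF j p k| := by
      intro k
      rw [binPMF_succ,
        show (1-p) * binPMF j p (k+1) + p * binPMF j p k - binPMF j p (k+1)
          = -(p * (binPMF j p (k+1) - binPMF j p k)) by ring, abs_neg, abs_mul,
        abs_of_nonneg hp]
    rw [h0, Finset.sum_congr rfl (fun k _ => h1 k), ← Finset.mul_sum]
    ring
  rw [hsum]
  have hbound := abs_sum_unimodal (binPMF j p) (⌊((j:ℝ)+1) * p⌋₊) R hkstR hnn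
    (fun k hk => binPMF_mono_up hp hq (by
      have : (k:ℝ) + 1 ≤ (⌊((j:ℝ)+1) * p⌋₊:ℝ) := by exact_mod_cast Nat.succ_le_of_lt hk
      linarith))
    (fun k hk => binPMF_mono_down hp hq1 (by
      have : (⌊((j:ℝ)+1) * p⌋₊:ℝ) ≤ (k:ℝ) := by exact_mod_cast hk
      linarith))
  nlinarith [hbound, hnn ⌊((j:ℝ)+1) * p⌋₊]

set_option maxHeartbeats 1000000 in
lemma mode_bound (p₀ : ℝ) (hp₀ : p₀ < 1) (j : ℕ) (hj : 1 ≤ j) (p : ℝ)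
    (hp : 0 ≤ p) (hpp : p ≤ p₀) :
    p * binPMF j p (⌊((j:ℝ)+1) * p⌋₊) * Real.sqrt j
      ≤ 4 + Real.sqrt (8/(1-p₀)) + 2/Real.sqrt (1-p₀) := by
  have hp1 : p < 1 := lt_of_le_of_lt hpp hp₀
  have hq : p ≤ 1 := hp1.le
  have hp₀' : (0:ℝ) < 1 - p₀ := by linarith
  have ht : (0:ℝ) < Real.sqrt (1-p₀) := Real.sqrt_pos.2 hp₀'
  have hT1 : (0:ℝ) ≤ Real.sqrt (8/(1-p₀)) := Real.sqrt_nonneg _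
  have hT2 : (0:ℝ) ≤ 2/Real.sqrt (1-p₀) := by positivity
  set kst : ℕ := ⌊((j:ℝ)+1) * p⌋₊ with hkst
  have hs0 : 0 ≤ binPMF j p kst := binPMF_nonneg hp hq
  have hs1 : binPMF j p kst ≤ 1 := binPMF_le_one hp hq
  have ha2 : Real.sqrt j ^ 2 = (j:ℝ) := Real.sq_sqrt (by positivity)
  have ha1 : (1:ℝ) ≤ Real.sqrt j := by
    rw [show (1:ℝ) = Real.sqrt 1 by simp]
    exact Real.sqrt_le_sqrt (by exact_mod_cast hj)
  have ha0 : (0:ℝ) ≤ Real.sqrt j := Real.sqrt_nonneg _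
  set a := Real.sqrt j with haa
  set s := binPMF j p kst with hss
  rcases le_or_gt ((j:ℝ)*p) 4 with hcase1 | hcase1
  · -- jp ≤ 4 : p·a ≤ 4
    have e1 : p * a^2 ≤ 4 := by rw [ha2]; linarith
    have haa2 : a ≤ a^2 := by
      rw [sq]
      calc a = 1*a := (one_mul a).symm
        _ ≤ a*a := mul_le_mul_of_nonneg_right ha1 ha0
    have h1 : p * a ≤ 4 := by
      have := mul_le_mul_of_nonneg_left haa2 hp
      linarith
    have h2 : p * s * a ≤ p * a := by
      have := mul_le_mul_of_nonneg_left hs1 (mul_nonneg hp ha0)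
      linarith [this]
    linarith
  rcases le_or_gt ((j:ℝ)*(1-p₀)) 8 with hcase2 | hcase2
  · -- j ≤ 8/(1-p₀)
    have h1 : a ≤ Real.sqrt (8/(1-p₀)) := by
      apply Real.sqrt_le_sqrt
      rw [le_div_iff₀ hp₀']
      linarith
    have h2 : p * s * a ≤ a := by
      have hps : p * s ≤ 1 := mul_le_one₀ hq hs0 hs1
      have := mul_le_mul_of_nonneg_right hps ha0
      linarith [this]
    linarith
  -- main case
  have hfl : ((kst:ℕ):ℝ) ≤ ((j:ℝ)+1) * p := Nat.floor_le (by positivity)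
  have hfg : ((j:ℝ)+1) * p < (kst:ℝ) + 1 := Nat.lt_floor_add_one _
  have hjp4 : (4:ℝ) < (j:ℝ)*p := hcase1
  have hexp : ((j:ℝ)+1)*p = (j:ℝ)*p + p := by ring
  have hjp : (j:ℝ)*(p₀-p) ≥ 0 := mul_nonneg (by positivity) (by linarith)
  have hk1 : 1 ≤ kst := by
    have : (1:ℝ) ≤ (kst:ℝ) := by linarith
    exact_mod_cast this
  have hkj : kst + 1 ≤ j := by
    have h2 : (kst:ℝ) + 1 ≤ (j:ℝ) := by linarith
    exact_mod_cast (by push_cast; linarith : ((kst+1:ℕ):ℝ) ≤ ((j:ℕ):ℝ))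
  have hcast : ((j - kst:ℕ):ℝ) = (j:ℝ) - kst := by
    rw [Nat.cast_sub (by omega)]
  have hS := pmf_stirling j kst hk1 hkj p hp hq
  set v := Real.sqrt kst with hvv
  set w := Real.sqrt ((j - kst:ℕ)) with hww
  set t := Real.sqrt (1-p₀) with htt
  set r := Real.sqrt p with hrr
  have hv2 : v^2 = (kst:ℝ) := Real.sq_sqrt (by positivity)
  have hw2 : w^2 = (j:ℝ) - kst := by rw [hww, Real.sq_sqrt (by positivity), hcast]
  have ht2 : t^2 = 1 - p₀ := Real.sq_sqrt hp₀'.le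
  have hr2 : r^2 = p := Real.sq_sqrt hp
  have hr1 : r ≤ 1 := by
    rw [hrr, show (1:ℝ) = Real.sqrt 1 by simp]
    exact Real.sqrt_le_sqrt hq
  have hr0 : 0 ≤ r := Real.sqrt_nonneg _
  have hv0 : 0 ≤ v := Real.sqrt_nonneg _
  have hw0 : 0 ≤ w := Real.sqrt_nonneg _
  have hvlb : (3/4) * ((j:ℝ)*p) ≤ v^2 := by rw [hv2]; linarith
  have hwlb : (7/8) * ((j:ℝ)*(1-p₀)) ≤ w^2 := by rw [hw2]; linarith
  have hvpos : 0 < v := Real.sqrt_pos.2 (Nat.cast_pos.2 hk1)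
  have hwpos : 0 < w := Real.sqrt_pos.2 (by
      rw [hcast]
      have : (kst:ℝ) + 1 ≤ (j:ℝ) := by exact_mod_cast hkj
      linarith)
  have hA : s * (v * w) ≤ a := by
    rw [le_div_iff₀ (by positivity)] at hS
    linarith [hS]
  have hA2 : s^2 * (v^2 * w^2) ≤ a^2 := by
    have h := mul_self_le_mul_self (mul_nonneg hs0 (mul_nonneg hv0 hw0)) hA
    calc s^2 * (v^2 * w^2) = (s*(v*w)) * (s*(v*w)) := by ring
      _ ≤ a * a := h
      _ = a^2 := by ring
  have e1 : (j:ℝ)*p = a^2 * r^2 := by rw [ha2, hr2]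
  have e2 : (j:ℝ)*(1-p₀) = a^2 * t^2 := by rw [ha2, ht2]
  have hvw2 : (21/32) * (a^2*r^2) * (a^2*t^2) ≤ v^2 * w^2 := by
    rw [← e1, ← e2]
    have hprod := mul_le_mul hvlb hwlb (by linarith) (sq_nonneg v)
    calc 21/32*((j:ℝ)*p)*((j:ℝ)*(1-p₀)) = (3/4*((j:ℝ)*p)) * (7/8*((j:ℝ)*(1-p₀))) := by ring
      _ ≤ v^2*w^2 := hprod
  have hmul := mul_le_mul_of_nonneg_left hvw2 (sq_nonneg s)
  have hC : (s*a*r*t)^2 * a^2 ≤ (32/21) * a^2 := by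
    calc (s*a*r*t)^2 * a^2 = (32/21) * (s^2 * ((21/32)*(a^2*r^2)*(a^2*t^2))) := by ring
      _ ≤ (32/21) * (s^2 * (v^2*w^2)) := by linarith [hmul]
      _ ≤ (32/21) * a^2 := by linarith [hA2]
  have ha2ge : (1:ℝ) ≤ a^2 := by
    rw [sq]
    calc (1:ℝ) = 1*1 := by norm_num
      _ ≤ a*a := mul_le_mul ha1 ha1 zero_le_one ha0
  have hD : (s*a*r*t)^2 ≤ 32/21 := le_of_mul_le_mul_right hC (by linarith)
  have hsart0 : 0 ≤ s*a*r*t := mul_nonneg (mul_nonneg (mul_nonneg hs0 ha0) hr0) ht.le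
  have hE : s*a*r*t ≤ 2 := by linarith [hD, sq_nonneg (s*a*r*t - 2)]
  have hfin : p * s * a ≤ 2/t := by
    rw [le_div_iff₀ ht]
    have heq : p * s * a * t = r * (s*a*r*t) := by rw [← hr2]; ring
    rw [heq]
    have := mul_le_mul_of_nonneg_right hr1 hsart0
    linarith [this, hE]
  linarith

lemma sqrt_gap (j : ℕ) (hj : 1 ≤ j) :
    2/5 ≤ (Real.sqrt ((j:ℝ)+1) - Real.sqrt j) * Real.sqrt j := by
  set a := Real.sqrt (j:ℝ) with haa
  set b := Real.sqrt ((j:ℝ)+1) with hbb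
  have ha2 : a^2 = (j:ℝ) := Real.sq_sqrt (by positivity)
  have hb2 : b^2 = (j:ℝ)+1 := Real.sq_sqrt (by positivity)
  have ha0 : 0 ≤ a := Real.sqrt_nonneg _
  have hb0 : 0 ≤ b := Real.sqrt_nonneg _
  have ha1 : (1:ℝ) ≤ a := by
    rw [haa, show (1:ℝ) = Real.sqrt 1 by simp]
    exact Real.sqrt_le_sqrt (by exact_mod_cast hj)
  have hba : a ≤ b := Real.sqrt_le_sqrt (by linarith [ha2])
  have hb15 : b ≤ (3/2) * a := by
    rw [hbb, haa, show (3/2:ℝ) * Real.sqrt j = Real.sqrt ((3/2)^2) * Real.sqrt j by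
      rw [Real.sqrt_sq (by norm_num)], ← Real.sqrt_mul (by norm_num)]
    apply Real.sqrt_le_sqrt
    have hj1 : (1:ℝ) ≤ (j:ℝ) := by exact_mod_cast hj
    nlinarith
  have hkey : (b - a) * (b + a) = 1 := by linear_combination hb2 - ha2
  have hsum : b + a ≤ (5/2) * a := by linarith
  have hmul : (b - a) * (b + a) ≤ (b - a) * ((5/2) * a) :=
    mul_le_mul_of_nonneg_left hsum (by linarith)
  nlinarith [hmul, hkey]

/-- Uniformly over `p ≤ p₀ < 1`,
`d_TV(Bin(n,p), Bin(m,p)) = O(|√n − √m|)`. -/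
theorem binomial_tv_sqrt_bound (p₀ : ℝ) (hp₀ : p₀ < 1) :
    ∃ K : ℝ, ∀ n m : ℕ, 0 < n → 0 < m → ∀ p : ℝ, 0 ≤ p → p ≤ p₀ →
      (1 / 2) * (∑' k : ℕ, |binPMF n p k - binPMF m p k|)
        ≤ K * |Real.sqrt n - Real.sqrt m| := by
  have hp₀' : (0:ℝ) < 1 - p₀ := by linarith
  set Kc : ℝ := 4 + Real.sqrt (8/(1-p₀)) + 2/Real.sqrt (1-p₀) with hKc
  have hKc0 : 0 ≤ Kc := by positivity
  clear_value Kc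
  refine ⟨(5/2) * Kc, ?_⟩
  have aux : ∀ n m : ℕ, 0 < n → n ≤ m → ∀ p : ℝ, 0 ≤ p → p ≤ p₀ →
      (1/2) * (∑' k : ℕ, |binPMF n p k - binPMF m p k|)
        ≤ (5/2) * Kc * (Real.sqrt m - Real.sqrt n) := by
    intro n m hn hnm p hp hpp
    have hp1 : p < 1 := lt_of_le_of_lt hpp hp₀
    have htsum : (∑' k : ℕ, |binPMF n p k - binPMF m p k|)
        = ∑ k ∈ range (m+1), |binPMF n p k - binPMF m p k| := by
      apply tsum_eq_sum
      intro k hk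
      have hk' : m < k := by
        rcases lt_or_ge k (m+1) with h | h
        · exact absurd (Finset.mem_range.2 h) hk
        · omega
      rw [binPMF_zero (lt_of_le_of_lt hnm hk'), binPMF_zero hk', sub_zero, abs_zero]
    rw [htsum]
    have tri : ∑ k ∈ range (m+1), |binPMF n p k - binPMF m p k|
        ≤ ∑ j ∈ Finset.Ico n m, ∑ k ∈ range (m+1), |binPMF (j+1) p k - binPMF j p k| := by
      have step : ∀ k, |binPMF n p k - binPMF m p k|
          ≤ ∑ j ∈ Finset.Ico n m, |binPMF (j+1) p k - binPMF j p k| := by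
        intro k
        have ht := tele (fun i => binPMF i p k) hnm
        rw [show binPMF n p k - binPMF m p k
            = -(∑ j ∈ Finset.Ico n m, (binPMF (j+1) p k - binPMF j p k)) by rw [ht]; ring,
          abs_neg]
        exact Finset.abs_sum_le_sum_abs _ _
      calc ∑ k ∈ range (m+1), |binPMF n p k - binPMF m p k|
          ≤ ∑ k ∈ range (m+1), ∑ j ∈ Finset.Ico n m, |binPMF (j+1) p k - binPMF j p k| :=
            Finset.sum_le_sum (fun k _ => step k)
        _ = ∑ j ∈ Finset.Ico n m, ∑ k ∈ range (m+1), |binPMF (j+1) p k - binPMF j p k| :=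
            Finset.sum_comm
    have perj : ∀ j ∈ Finset.Ico n m,
        ∑ k ∈ range (m+1), |binPMF (j+1) p k - binPMF j p k|
          ≤ 2 * ((5/2) * Kc * (Real.sqrt ((j+1:ℕ)) - Real.sqrt j)) := by
      intro j hj
      obtain ⟨hj1, hj2⟩ := Finset.mem_Ico.1 hj
      have h1 := onestep j m hj2 p hp hp1
      have h2 := mode_bound p₀ hp₀ j (by omega) p hp hpp
      rw [← hKc] at h2
      have h3 := sqrt_gap j (by omega)
      have hcast : Real.sqrt ((j+1:ℕ)) = Real.sqrt ((j:ℝ)+1) := by push_cast; ring_nf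
      rw [hcast]
      set s := binPMF j p (⌊((j:ℝ)+1) * p⌋₊) with hss
      have hs0 : 0 ≤ s := binPMF_nonneg hp hp1.le
      set A := Real.sqrt (j:ℝ) with hA
      set B := Real.sqrt ((j:ℝ)+1) with hB
      have hBA : 0 ≤ B - A := by
        have : A ≤ B := Real.sqrt_le_sqrt (by linarith [Nat.cast_nonneg (α := ℝ) j])
        linarith
      clear_value s A B
      -- p*s ≤ (5/2) Kc (B - A)
      have key : p * s ≤ (5/2) * Kc * (B - A) := by
        have e1 : (2/5) * (p*s) ≤ (p * s * A) * (B - A) := by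
          have := mul_le_mul_of_nonneg_left h3 (mul_nonneg hp hs0)
          nlinarith [this]
        have e2 : (p * s * A) * (B - A) ≤ Kc * (B - A) :=
          mul_le_mul_of_nonneg_right h2 hBA
        linarith [e1, e2]
      calc ∑ k ∈ range (m+1), |binPMF (j+1) p k - binPMF j p k| ≤ 2 * p * s := h1
        _ ≤ 2 * ((5/2) * Kc * (B - A)) := by linarith
    have sum_tele : ∑ j ∈ Finset.Ico n m, (Real.sqrt ((j+1:ℕ)) - Real.sqrt j)
        = Real.sqrt m - Real.sqrt n := tele (fun i : ℕ => Real.sqrt i) hnm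
    have total : ∑ j ∈ Finset.Ico n m, ∑ k ∈ range (m+1), |binPMF (j+1) p k - binPMF j p k|
        ≤ 2 * ((5/2) * Kc * (Real.sqrt m - Real.sqrt n)) := by
      calc ∑ j ∈ Finset.Ico n m, ∑ k ∈ range (m+1), |binPMF (j+1) p k - binPMF j p k|
          ≤ ∑ j ∈ Finset.Ico n m, 2 * ((5/2) * Kc * (Real.sqrt ((j+1:ℕ)) - Real.sqrt j)) :=
            Finset.sum_le_sum perj
        _ = 2 * ((5/2) * Kc) * ∑ j ∈ Finset.Ico n m, (Real.sqrt ((j+1:ℕ)) - Real.sqrt j) := by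
            rw [Finset.mul_sum]
            apply Finset.sum_congr rfl
            intro j _
            ring
        _ = 2 * ((5/2) * Kc * (Real.sqrt m - Real.sqrt n)) := by rw [sum_tele]; ring
    linarith
  intro n m hn hm p hp hpp
  rcases le_total n m with h | h
  · have hmono : Real.sqrt n ≤ Real.sqrt m := Real.sqrt_le_sqrt (by exact_mod_cast h)
    have habs : |Real.sqrt n - Real.sqrt m| = Real.sqrt m - Real.sqrt n := by
      rw [abs_sub_comm, abs_of_nonneg (by linarith)]
    rw [habs]
    exact aux n m hn h p hp hpp
  · have hmono : Real.sqrt m ≤ Real.sqrt n := Real.sqrt_le_sqrt (by exact_mod_cast h)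
    have habs : |Real.sqrt n - Real.sqrt m| = Real.sqrt n - Real.sqrt m := by
      rw [abs_of_nonneg (by linarith)]
    have h1 : (∑' k : ℕ, |binPMF n p k - binPMF m p k|)
        = ∑' k : ℕ, |binPMF m p k - binPMF n p k| :=
      tsum_congr (fun k => abs_sub_comm _ _)
    rw [habs, h1]
    exact aux m n hm h p hp hpp
end

section
/- Let m < n be natural numbers. Then the map p ↦ d_TV(Bin(n,p), Bin(m,p)) is non-decreasing on [0,1); in particular, for all 0 ≤ p ≤ p₀ < 1, d_TV(Bin(n,p), Bin(m,p)) ≤ d_TV(Bin(n,p₀), Bin(m,p₀)). Here d_TV(Bin(n,p),Bin(m,p)) = (1/2) ∑_{k∈ℕ} |f(k;n,p) − f(k;m,p)| with f(k;N,p) = C(N,k) p^k (1−p)^{N−k} for 0 ≤ k ≤ N and f(k;N,p) = 0 otherwise. -/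
lemma binPMF_eq_zero {N k : ℕ} (h : N < k) (p : ℝ) : binPMF N p k = 0 := by
  simp [binPMF, Nat.choose_eq_zero_of_lt h]

lemma binPMF_nonneg_s8 {q : ℝ} (hq0 : 0 ≤ q) (hq1 : q ≤ 1) (k j : ℕ) :
    0 ≤ binPMF k q j := by
  have : (0:ℝ) ≤ 1 - q := by linarith
  unfold binPMF
  positivity

/-- Binomial thinning identity. -/
lemma binPMF_thin (N j : ℕ) (p q : ℝ) :
    ∑ k ∈ Finset.range (N + 1), binPMF N p k * binPMF k q j = binPMF N (p * q) j := by
  by_cases hj : j ≤ N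
  · have hsplit :
        ∑ k ∈ Finset.range j, (binPMF N p k * binPMF k q j) +
          ∑ k ∈ Finset.Ico j (N + 1), (binPMF N p k * binPMF k q j)
          = ∑ k ∈ Finset.range (N + 1), binPMF N p k * binPMF k q j :=
      Finset.sum_range_add_sum_Ico _ (by omega)
    have h0 : ∑ k ∈ Finset.range j, (binPMF N p k * binPMF k q j) = 0 := by
      apply Finset.sum_eq_zero
      intro k hk
      rw [binPMF_eq_zero (Finset.mem_range.mp hk) q, mul_zero]
    rw [← hsplit, h0, zero_add, Finset.sum_Ico_eq_sum_range]
    have hrange : N + 1 - j = N - j + 1 := by omega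
    rw [hrange]
    set M := N - j with hM
    have hterm : ∀ i ∈ Finset.range (M + 1),
        binPMF N p (j + i) * binPMF (j + i) q j =
          (N.choose j : ℝ) * (p * q) ^ j *
            ((p * (1 - q)) ^ i * (1 - p) ^ (M - i) * (M.choose i : ℝ)) := by
      intro i hi
      have hiM : i ≤ M := by
        have := Finset.mem_range.mp hi; omega
      have hkN : j + i ≤ N := by omega
      have hchoose : N.choose (j + i) * (j + i).choose j = N.choose j * M.choose i := by
        have := Nat.choose_mul (n := N) (Nat.le_add_right j i)
        simpa [Nat.add_sub_cancel_left, hM] using this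
      have hsub : N - (j + i) = M - i := by omega
      have hsub2 : j + i - j = i := by omega
      unfold binPMF
      rw [hsub, hsub2]
      have : ((N.choose (j + i) : ℝ) * ((j + i).choose j : ℝ)) =
          (N.choose j : ℝ) * (M.choose i : ℝ) := by exact_mod_cast congrArg Nat.cast hchoose
      rw [pow_add]
      calc (N.choose (j+i) : ℝ) * (p ^ j * p ^ i) * (1 - p) ^ (M - i) *
              (((j+i).choose j : ℝ) * q ^ j * (1 - q) ^ i)
          = ((N.choose (j+i) : ℝ) * ((j+i).choose j : ℝ)) *
              (p ^ j * p ^ i * (1 - p) ^ (M - i) * (q ^ j * (1 - q) ^ i)) := by ring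
        _ = (N.choose j : ℝ) * (M.choose i : ℝ) *
              (p ^ j * p ^ i * (1 - p) ^ (M - i) * (q ^ j * (1 - q) ^ i)) := by rw [this]
        _ = (N.choose j : ℝ) * (p * q) ^ j *
              ((p * (1 - q)) ^ i * (1 - p) ^ (M - i) * (M.choose i : ℝ)) := by
            rw [mul_pow, mul_pow]; ring
    rw [Finset.sum_congr rfl hterm, ← Finset.mul_sum, ← add_pow (p * (1 - q)) (1 - p) M]
    have h1 : p * (1 - q) + (1 - p) = 1 - p * q := by ring
    rw [h1]
    unfold binPMF
    rw [hM]
  · push_neg at hj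
    rw [binPMF_eq_zero hj (p * q)]
    apply Finset.sum_eq_zero
    intro k hk
    have hk' : k < j := by
      have := Finset.mem_range.mp hk; omega
    rw [binPMF_eq_zero hk' q, mul_zero]

/-- Thinning identity with a larger summation range. -/
lemma binPMF_thin' {N R : ℕ} (hNR : N ≤ R) (j : ℕ) (p q : ℝ) :
    ∑ k ∈ Finset.range (R + 1), binPMF N p k * binPMF k q j = binPMF N (p * q) j := by
  rw [← binPMF_thin N j p q]
  symm
  apply Finset.sum_subset
  · intro x hx
    simp only [Finset.mem_range] at hx ⊢
    omega
  · intro x _ hx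
    have hx' : N < x := by
      simp only [Finset.mem_range] at hx; omega
    simp [binPMF_eq_zero hx' p]

/-- Row sums of the thinning kernel are 1. -/
lemma binPMF_rowsum {k R : ℕ} (hkR : k ≤ R) (q : ℝ) :
    ∑ j ∈ Finset.range (R + 1), binPMF k q j = 1 := by
  have hsub : ∑ j ∈ Finset.range (R + 1), binPMF k q j
      = ∑ j ∈ Finset.range (k + 1), binPMF k q j := by
    symm
    apply Finset.sum_subset
    · intro x hx
      simp only [Finset.mem_range] at hx ⊢
      omega
    · intro x _ hx
      have hx' : k < x := by
        simp only [Finset.mem_range] at hx; omega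
      exact binPMF_eq_zero hx' q
  rw [hsub]
  have := add_pow q (1 - q) k
  have h1 : q + (1 - q) = 1 := by ring
  rw [h1, one_pow] at this
  rw [this]
  apply Finset.sum_congr rfl
  intro j hj
  unfold binPMF
  ring

/-- Key contraction inequality (data processing for the thinning kernel). -/
lemma tv_thin_le (n m : ℕ) (hmn : m ≤ n) (p q : ℝ) (hq0 : 0 ≤ q) (hq1 : q ≤ 1) :
    ∑ k ∈ Finset.range (n + 1), |binPMF n (p * q) k - binPMF m (p * q) k|
      ≤ ∑ k ∈ Finset.range (n + 1), |binPMF n p k - binPMF m p k| := by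
  calc ∑ j ∈ Finset.range (n + 1), |binPMF n (p * q) j - binPMF m (p * q) j|
      = ∑ j ∈ Finset.range (n + 1),
          |∑ k ∈ Finset.range (n + 1), (binPMF n p k - binPMF m p k) * binPMF k q j| := by
        apply Finset.sum_congr rfl
        intro j _
        congr 1
        have h1 := binPMF_thin' (le_refl n) j p q
        have h2 := binPMF_thin' hmn j p q
        rw [← h1, ← h2, ← Finset.sum_sub_distrib]
        apply Finset.sum_congr rfl
        intro k _
        ring
    _ ≤ ∑ j ∈ Finset.range (n + 1),
          ∑ k ∈ Finset.range (n + 1), |binPMF n p k - binPMF m p k| * binPMF k q j := by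
        apply Finset.sum_le_sum
        intro j _
        refine le_trans (Finset.abs_sum_le_sum_abs _ _) ?_
        apply Finset.sum_le_sum
        intro k _
        rw [abs_mul, abs_of_nonneg (binPMF_nonneg_s8 hq0 hq1 k j)]
    _ = ∑ k ∈ Finset.range (n + 1),
          |binPMF n p k - binPMF m p k| * ∑ j ∈ Finset.range (n + 1), binPMF k q j := by
        rw [Finset.sum_comm]
        apply Finset.sum_congr rfl
        intro k _
        rw [Finset.mul_sum]
    _ = ∑ k ∈ Finset.range (n + 1), |binPMF n p k - binPMF m p k| := by
        apply Finset.sum_congr rfl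
        intro k hk
        rw [binPMF_rowsum (by have := Finset.mem_range.mp hk; omega) q, mul_one]

lemma binTV_tsum_eq_finsum (n m : ℕ) (hmn : m ≤ n) (p : ℝ) :
    ∑' k : ℕ, |binPMF n p k - binPMF m p k|
      = ∑ k ∈ Finset.range (n + 1), |binPMF n p k - binPMF m p k| := by
  apply tsum_eq_sum
  intro k hk
  have hk' : n < k := by
    simp only [Finset.mem_range] at hk; omega
  rw [binPMF_eq_zero hk' p, binPMF_eq_zero (by omega) p, sub_zero, abs_zero]

lemma key_mono (n m : ℕ) (hmn : m ≤ n) (p p₀ : ℝ) (hp : 0 ≤ p) (hpp : p ≤ p₀) :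
    ∑' k : ℕ, |binPMF n p k - binPMF m p k|
      ≤ ∑' k : ℕ, |binPMF n p₀ k - binPMF m p₀ k| := by
  rw [binTV_tsum_eq_finsum n m hmn, binTV_tsum_eq_finsum n m hmn]
  rcases eq_or_lt_of_le hp with h0 | h0
  · rcases eq_or_lt_of_le hpp with h1 | h1
    · rw [h1]
    · have hp₀ : 0 < p₀ := by linarith
      have hq0 : 0 ≤ p / p₀ := div_nonneg hp hp₀.le
      have hq1 : p / p₀ ≤ 1 := (div_le_one hp₀).mpr hpp
      have hpq : p = p₀ * (p / p₀) := by field_simp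
      rw [hpq]
      exact tv_thin_le n m hmn p₀ (p / p₀) hq0 hq1
  · have hp₀ : 0 < p₀ := lt_of_lt_of_le h0 hpp
    have hq0 : 0 ≤ p / p₀ := div_nonneg hp hp₀.le
    have hq1 : p / p₀ ≤ 1 := (div_le_one hp₀).mpr hpp
    have hpq : p = p₀ * (p / p₀) := by field_simp
    rw [hpq]
    exact tv_thin_le n m hmn p₀ (p / p₀) hq0 hq1

/-- For `m < n`, `p ↦ d_TV(Bin(n,p), Bin(m,p))` is non-decreasing on `[0,1)`;
in particular it attains its supremum over `[0,p₀]` at `p₀`. -/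
theorem binomial_tv_monotone (n m : ℕ) (hmn : m < n) :
    MonotoneOn
      (fun p : ℝ => (1 / 2) * ∑' k : ℕ, |binPMF n p k - binPMF m p k|)
      (Set.Ico (0 : ℝ) 1) ∧
    ∀ p p₀ : ℝ, 0 ≤ p → p ≤ p₀ → p₀ < 1 →
      (1 / 2) * (∑' k : ℕ, |binPMF n p k - binPMF m p k|)
        ≤ (1 / 2) * ∑' k : ℕ, |binPMF n p₀ k - binPMF m p₀ k| := by
  constructor
  · intro a ha b _ hab
    have := key_mono n m hmn.le a b ha.1 hab
    simp only
    linarith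
  · intro p p₀ hp hpp _
    have := key_mono n m hmn.le p p₀ hp hpp
    linarith
end

section
/- Let n ∈ ℕ and 1 ≤ k₀ ≤ n. For p ∈ (0,1), the function p ↦ ∑_{k=k₀}^{n} C(n,k) p^k (1−p)^{n−k} is differentiable and its derivative equals (k₀/p) · C(n,k₀) p^{k₀} (1−p)^{n−k₀}. -/
open Finset

private lemma tele_sum (g : ℕ → ℝ) (a : ℕ) :
    ∀ b, a ≤ b → ∑ k ∈ Icc a b, (g k - g (k + 1)) = g a - g (b + 1) := by
  intro b hb
  induction b, hb using Nat.le_induction with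
  | base => simp
  | succ m hm ih =>
    rw [Finset.sum_Icc_succ_top (by omega), ih]
    ring

/-- The binomial upper tail `P(X ≥ k₀)` for `X ~ Bin(n,p)` is differentiable in
`p ∈ (0,1)`, with derivative `(k₀/p) C(n,k₀) p^{k₀} (1−p)^{n−k₀}`. -/
theorem binomial_tail_hasDerivAt (n k₀ : ℕ) (hk₀ : 1 ≤ k₀) (hk₀n : k₀ ≤ n)
    (p : ℝ) (hp : 0 < p) (hp1 : p < 1) :
    HasDerivAt
      (fun x : ℝ => ∑ k ∈ Finset.Icc k₀ n, (n.choose k : ℝ) * x ^ k * (1 - x) ^ (n - k))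
      (((k₀ : ℝ) / p) * ((n.choose k₀ : ℝ) * p ^ k₀ * (1 - p) ^ (n - k₀))) p := by
  have hp0 : p ≠ 0 := ne_of_gt hp
  set g : ℕ → ℝ := fun k => (k : ℝ) * (n.choose k : ℝ) * p ^ (k - 1) * (1 - p) ^ (n - k)
    with hg
  have hsum : HasDerivAt
      (fun x : ℝ => ∑ k ∈ Finset.Icc k₀ n, (n.choose k : ℝ) * x ^ k * (1 - x) ^ (n - k))
      (∑ k ∈ Icc k₀ n, (g k - g (k + 1))) p := by
    apply HasDerivAt.fun_sum
    intro k hk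
    have hkmem := Finset.mem_Icc.mp hk
    have hkn : k ≤ n := hkmem.2
    have h1 : HasDerivAt (fun x : ℝ => (n.choose k : ℝ) * x ^ k)
        ((n.choose k : ℝ) * ((k : ℝ) * p ^ (k - 1))) p := (hasDerivAt_pow k p).const_mul _
    have h2 : HasDerivAt (fun x : ℝ => (1 - x) ^ (n - k))
        (((n - k : ℕ) : ℝ) * (1 - p) ^ (n - k - 1) * (-1)) p := by
      simpa using ((hasDerivAt_id p).const_sub 1).fun_pow (n - k)
    have hmul := h1.fun_mul h2
    convert hmul using 1
    · rfl
    have hc : ((n.choose (k + 1) : ℝ) * ((k : ℝ) + 1)) = (n.choose k : ℝ) * ((n : ℝ) - k) := by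
      have h := Nat.choose_succ_right_eq n k
      have h' : ((n.choose (k + 1) * (k + 1) : ℕ) : ℝ) = ((n.choose k * (n - k) : ℕ) : ℝ) := by
        rw [h]
      push_cast [Nat.cast_sub hkn] at h'
      linarith
    have hnk : ((n - k : ℕ) : ℝ) = (n : ℝ) - k := by
      push_cast [Nat.cast_sub hkn]; ring
    simp only [hg]
    have hek : (k + 1) - 1 = k := by omega
    have hek2 : n - (k + 1) = n - k - 1 := by omega
    rw [hek, hek2, hnk]
    push_cast
    linear_combination (-(p ^ k * (1 - p) ^ (n - k - 1))) * hc
  have hval : ∑ k ∈ Icc k₀ n, (g k - g (k + 1))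
      = ((k₀ : ℝ) / p) * ((n.choose k₀ : ℝ) * p ^ k₀ * (1 - p) ^ (n - k₀)) := by
    rw [tele_sum g k₀ n hk₀n]
    have h0 : g (n + 1) = 0 := by
      simp [hg, Nat.choose_succ_self]
    rw [h0, sub_zero, hg]
    have hpk : p ^ k₀ = p * p ^ (k₀ - 1) := by
      conv_lhs => rw [show k₀ = (k₀ - 1) + 1 by omega]
      rw [pow_succ]; ring
    rw [hpk]
    field_simp
  rw [← hval]
  exact hsum
end

section
/- Let A and B be d×d real matrices with non-negative entries. Then √(ρ(A + B)) ≤ ρ(√(A+B)) ≤ ρ(√A + 2√B), where √M denotes the entrywise square root of a matrix M with non-negative entries. In particular, the condition ρ(√A + 2√B) < 1 implies ρ(A + B) < 1. -/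
open scoped ENNReal

/-- The spectral radius of a real square matrix: the maximum modulus of its
complex eigenvalues. -/
noncomputable def specRad {d : ℕ} (M : Matrix (Fin d) (Fin d) ℝ) : ℝ≥0∞ :=
  spectralRadius ℂ (M.map (fun x => (x : ℂ)))

section Aux

open Matrix Filter

attribute [local instance] Matrix.linftyOpNormedRing Matrix.linftyOpNormedAlgebra

variable {d : ℕ}

private lemma map_pow_eq (M : Matrix (Fin d) (Fin d) ℝ) (n : ℕ) :
    (M.map (fun x => (x : ℂ))) ^ n = (M ^ n).map (fun x => (x : ℂ)) := by
  have h := map_pow ((algebraMap ℝ ℂ).mapMatrix) M n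
  simpa [RingHom.mapMatrix_apply, Complex.coe_algebraMap] using h.symm

private lemma pow_entry_nonneg {M : Matrix (Fin d) (Fin d) ℝ}
    (h0 : ∀ i j, 0 ≤ M i j) (n : ℕ) : ∀ i j, 0 ≤ (M ^ n) i j := by
  induction n with
  | zero => intro i j; simp [Matrix.one_apply]; positivity
  | succ n ih =>
    intro i j
    rw [pow_succ, Matrix.mul_apply]
    exact Finset.sum_nonneg fun k _ => mul_nonneg (ih i k) (h0 k j)

private lemma pow_entry_mono {M N : Matrix (Fin d) (Fin d) ℝ}
    (h0 : ∀ i j, 0 ≤ M i j) (h : ∀ i j, M i j ≤ N i j) (n : ℕ) :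
    ∀ i j, (M ^ n) i j ≤ (N ^ n) i j := by
  have hN0 : ∀ i j, 0 ≤ N i j := fun i j => (h0 i j).trans (h i j)
  induction n with
  | zero => intro i j; simp
  | succ n ih =>
    intro i j
    rw [pow_succ, pow_succ, Matrix.mul_apply, Matrix.mul_apply]
    refine Finset.sum_le_sum fun k _ => ?_
    exact mul_le_mul (ih i k) (h k j) (h0 k j) (pow_entry_nonneg hN0 n i k)

private lemma nnnorm_map_le {M N : Matrix (Fin d) (Fin d) ℝ}
    (hN0 : ∀ i j, 0 ≤ N i j) (h : ∀ i j, |M i j| ≤ N i j) :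
    ‖M.map (fun x => (x : ℂ))‖₊ ≤ ‖N.map (fun x => (x : ℂ))‖₊ := by
  rw [Matrix.linfty_opNNNorm_def, Matrix.linfty_opNNNorm_def]
  refine Finset.sup_mono_fun fun i _ => Finset.sum_le_sum fun j _ => ?_
  simp only [Matrix.map_apply, Complex.nnnorm_real]
  rw [← NNReal.coe_le_coe]
  simp only [coe_nnnorm, Real.norm_eq_abs]
  rw [abs_of_nonneg (hN0 i j)]
  exact h i j

private lemma specRad_mono {M N : Matrix (Fin d) (Fin d) ℝ}
    (h0 : ∀ i j, 0 ≤ M i j) (h : ∀ i j, M i j ≤ N i j) :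
    specRad M ≤ specRad N := by
  have hgel := spectrum.pow_nnnorm_pow_one_div_tendsto_nhds_spectralRadius
      (N.map (fun x => (x : ℂ)))
  have hN0 : ∀ i j, 0 ≤ N i j := fun i j => (h0 i j).trans (h i j)
  unfold specRad
  refine le_trans (spectrum.spectralRadius_le_liminf_pow_nnnorm_pow_one_div ℂ _) ?_
  rw [← hgel.liminf_eq]
  refine Filter.liminf_le_liminf (Filter.Eventually.of_forall fun n => ?_)
  have key : ‖(M.map (fun x => (x : ℂ))) ^ n‖₊ ≤ ‖(N.map (fun x => (x : ℂ))) ^ n‖₊ := by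
    rw [map_pow_eq, map_pow_eq]
    refine nnnorm_map_le (pow_entry_nonneg hN0 n) fun i j => ?_
    rw [abs_of_nonneg (pow_entry_nonneg h0 n i j)]
    exact pow_entry_mono h0 h n i j
  exact ENNReal.rpow_le_rpow (by exact_mod_cast key) (by positivity)

private lemma hadamard_pow_entry_le {M : Matrix (Fin d) (Fin d) ℝ}
    (h0 : ∀ i j, 0 ≤ M i j) (n : ℕ) :
    ∀ i j, ((Matrix.of fun i j => M i j ^ 2) ^ n) i j ≤ ((M ^ n) i j) ^ 2 := by
  induction n with
  | zero =>
    intro i j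
    simp only [pow_zero, Matrix.one_apply]
    by_cases hij : i = j <;> simp [hij]
  | succ n ih =>
    intro i j
    have lhs_eq : ((Matrix.of fun i j => M i j ^ 2) ^ (n + 1)) i j
        = ∑ k, ((Matrix.of fun i j => M i j ^ 2) ^ n) i k
            * (Matrix.of fun i j => M i j ^ 2) k j := by
      rw [pow_succ, Matrix.mul_apply]
    have rhs_eq : (M ^ (n + 1)) i j = ∑ k, (M ^ n) i k * M k j := by
      rw [pow_succ, Matrix.mul_apply]
    rw [lhs_eq, rhs_eq]
    have hQ0 : ∀ i j, 0 ≤ (Matrix.of fun i j => M i j ^ 2) i j := by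
      intro i j; simp only [Matrix.of_apply]; positivity
    calc ∑ k, ((Matrix.of fun i j => M i j ^ 2) ^ n) i k
            * (Matrix.of fun i j => M i j ^ 2) k j
        ≤ ∑ k, ((M ^ n) i k * M k j) ^ 2 := by
          refine Finset.sum_le_sum fun k _ => ?_
          rw [mul_pow]
          exact mul_le_mul (ih i k) (le_of_eq rfl)
            (hQ0 k j) (by positivity)
      _ ≤ (∑ k, (M ^ n) i k * M k j) ^ 2 := by
          have hx : ∀ k : Fin d, 0 ≤ (M ^ n) i k * M k j :=
            fun k => mul_nonneg (pow_entry_nonneg h0 n i k) (h0 k j)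
          have hS : ∀ k ∈ Finset.univ, (M ^ n) i k * M k j
              ≤ ∑ l, (M ^ n) i l * M l j :=
            fun k _ => Finset.single_le_sum (fun l _ => hx l) (Finset.mem_univ k)
          rw [sq]
          calc ∑ k, ((M ^ n) i k * M k j) ^ 2
              ≤ ∑ k, ((M ^ n) i k * M k j) * (∑ l, (M ^ n) i l * M l j) := by
                refine Finset.sum_le_sum fun k hk => ?_
                rw [sq]
                exact mul_le_mul_of_nonneg_left (hS k hk) (hx k)
            _ = (∑ k, (M ^ n) i k * M k j) * (∑ l, (M ^ n) i l * M l j) := by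
                rw [← Finset.sum_mul]

private lemma specRad_sq_le {M : Matrix (Fin d) (Fin d) ℝ}
    (h0 : ∀ i j, 0 ≤ M i j) :
    specRad (Matrix.of fun i j => M i j ^ 2) ≤ specRad M ^ 2 := by
  have hgel := spectrum.pow_nnnorm_pow_one_div_tendsto_nhds_spectralRadius
      (M.map (fun x => (x : ℂ)))
  have hgel2 : Filter.Tendsto
      (fun n : ℕ => ((‖(M.map (fun x => (x : ℂ))) ^ n‖₊ : ℝ≥0∞) ^ (1 / n : ℝ)) ^ 2)
      Filter.atTop (nhds (spectralRadius ℂ (M.map (fun x => (x : ℂ))) ^ 2)) :=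
    ENNReal.Tendsto.pow hgel
  unfold specRad
  refine le_trans (spectrum.spectralRadius_le_liminf_pow_nnnorm_pow_one_div ℂ _) ?_
  rw [← hgel2.liminf_eq]
  refine Filter.liminf_le_liminf (Filter.Eventually.of_forall fun n => ?_)
  -- norm comparison: ‖Qⁿ‖ ≤ ‖Mⁿ‖²
  have key : ‖((Matrix.of fun i j => M i j ^ 2).map (fun x => (x : ℂ))) ^ n‖₊
      ≤ ‖(M.map (fun x => (x : ℂ))) ^ n‖₊ ^ 2 := by
    rw [map_pow_eq, map_pow_eq, Matrix.linfty_opNNNorm_def, Matrix.linfty_opNNNorm_def]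
    simp only [Matrix.map_apply, Complex.nnnorm_real]
    refine Finset.sup_le fun i _ => ?_
    have h1 : ∑ j, ‖((Matrix.of fun i j => M i j ^ 2) ^ n) i j‖₊
        ≤ (∑ j, ‖(M ^ n) i j‖₊) ^ 2 := by
      have hstep : ∀ j : Fin d, ‖((Matrix.of fun i j => M i j ^ 2) ^ n) i j‖₊
          ≤ ‖(M ^ n) i j‖₊ ^ 2 := by
        intro j
        have hQ0 : ∀ i j, 0 ≤ (Matrix.of fun i j => M i j ^ 2) i j := by
          intro i j; simp only [Matrix.of_apply]; positivity
        have h0' := pow_entry_nonneg hQ0 n i j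
        have := hadamard_pow_entry_le h0 n i j
        have habs : |((Matrix.of fun i j => M i j ^ 2) ^ n) i j| ≤ |(M ^ n) i j| ^ 2 := by
          rw [abs_of_nonneg h0', ← abs_pow, abs_of_nonneg (by positivity)]
          exact this
        have : ‖((Matrix.of fun i j => M i j ^ 2) ^ n) i j‖ ≤ ‖(M ^ n) i j‖ ^ 2 := by
          simpa [Real.norm_eq_abs] using habs
        exact_mod_cast this
      calc ∑ j, ‖((Matrix.of fun i j => M i j ^ 2) ^ n) i j‖₊
          ≤ ∑ j, ‖(M ^ n) i j‖₊ ^ 2 := Finset.sum_le_sum fun j _ => hstep j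
        _ ≤ (∑ j, ‖(M ^ n) i j‖₊) ^ 2 := by
            rw [sq]
            calc ∑ j, ‖(M ^ n) i j‖₊ ^ 2
                ≤ ∑ j, ‖(M ^ n) i j‖₊ * ∑ l, ‖(M ^ n) i l‖₊ := by
                  refine Finset.sum_le_sum fun j _ => ?_
                  rw [sq]
                  exact mul_le_mul_of_nonneg_left
                    (Finset.single_le_sum (f := fun l => ‖(M ^ n) i l‖₊)
                      (fun l _ => zero_le) (Finset.mem_univ j))
                    (zero_le)
              _ = (∑ j, ‖(M ^ n) i j‖₊) * ∑ l, ‖(M ^ n) i l‖₊ := by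
                  rw [← Finset.sum_mul]
    refine h1.trans ?_
    have : (∑ j, ‖(M ^ n) i j‖₊) ≤ Finset.univ.sup fun i => ∑ j, ‖(M ^ n) i j‖₊ :=
      Finset.le_sup (f := fun i => ∑ j, ‖(M ^ n) i j‖₊) (Finset.mem_univ i)
    exact pow_le_pow_left' this 2
  -- now raise to 1/n
  calc (‖((Matrix.of fun i j => M i j ^ 2).map (fun x => (x : ℂ))) ^ n‖₊ : ℝ≥0∞) ^ (1 / n : ℝ)
      ≤ ((‖(M.map (fun x => (x : ℂ))) ^ n‖₊ : ℝ≥0∞) ^ 2) ^ (1 / n : ℝ) := by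
        refine ENNReal.rpow_le_rpow ?_ (by positivity)
        exact_mod_cast key
    _ = ((‖(M.map (fun x => (x : ℂ))) ^ n‖₊ : ℝ≥0∞) ^ (1 / n : ℝ)) ^ 2 := by
        rw [← ENNReal.rpow_natCast _ 2, ← ENNReal.rpow_mul, mul_comm,
          ENNReal.rpow_mul, ENNReal.rpow_natCast]

end Aux

/-- For non-negative matrices `A`, `B`:
`√(ρ(A+B)) ≤ ρ(√(A+B)) ≤ ρ(√A + 2√B)`, where `√M` is the entrywise square
root; in particular `ρ(√A + 2√B) < 1` implies `ρ(A+B) < 1`. -/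
theorem specRad_sqrt_chain (d : ℕ) (A B : Matrix (Fin d) (Fin d) ℝ)
    (hA : ∀ i j, 0 ≤ A i j) (hB : ∀ i j, 0 ≤ B i j) :
    specRad (A + B) ^ ((1 : ℝ) / 2)
        ≤ specRad (Matrix.of fun i j => Real.sqrt ((A + B) i j)) ∧
    specRad (Matrix.of fun i j => Real.sqrt ((A + B) i j))
        ≤ specRad (Matrix.of fun i j => Real.sqrt (A i j) + 2 * Real.sqrt (B i j)) ∧
    (specRad (Matrix.of fun i j => Real.sqrt (A i j) + 2 * Real.sqrt (B i j)) < 1 →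
        specRad (A + B) < 1) := by
  set S : Matrix (Fin d) (Fin d) ℝ := Matrix.of fun i j => Real.sqrt ((A + B) i j) with hSdef
  have hS0 : ∀ i j, 0 ≤ S i j := fun i j => Real.sqrt_nonneg _
  have hAB0 : ∀ i j, 0 ≤ (A + B) i j := fun i j => by
    simp only [Matrix.add_apply]; exact add_nonneg (hA i j) (hB i j)
  have hSq : (Matrix.of fun i j => S i j ^ 2) = A + B := by
    ext i j
    simp only [Matrix.of_apply, hSdef]
    exact Real.sq_sqrt (hAB0 i j)
  have h1 : specRad (A + B) ≤ specRad S ^ 2 := by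
    rw [← hSq]; exact specRad_sq_le hS0
  have hST : ∀ i j, S i j ≤ (Matrix.of fun i j =>
      Real.sqrt (A i j) + 2 * Real.sqrt (B i j)) i j := by
    intro i j
    simp only [Matrix.of_apply, hSdef, Matrix.add_apply]
    have h2 : Real.sqrt (A i j + B i j) ≤ Real.sqrt (A i j) + Real.sqrt (B i j) := by
      have := Real.sqrt_le_sqrt (show A i j + B i j ≤ (Real.sqrt (A i j) + Real.sqrt (B i j)) ^ 2 by
        rw [add_sq]
        have hb := Real.sq_sqrt (hB i j)
        have ha := Real.sq_sqrt (hA i j)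
        nlinarith [Real.sqrt_nonneg (A i j), Real.sqrt_nonneg (B i j)])
      rwa [Real.sqrt_sq (by positivity)] at this
    refine h2.trans ?_
    nlinarith [Real.sqrt_nonneg (B i j)]
  have h2 : specRad S ≤ specRad (Matrix.of fun i j =>
      Real.sqrt (A i j) + 2 * Real.sqrt (B i j)) := specRad_mono hS0 hST
  refine ⟨?_, h2, ?_⟩
  · calc specRad (A + B) ^ ((1 : ℝ) / 2)
        ≤ (specRad S ^ 2) ^ ((1 : ℝ) / 2) := ENNReal.rpow_le_rpow h1 (by norm_num)
      _ = specRad S := by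
          rw [← ENNReal.rpow_natCast _ 2, ← ENNReal.rpow_mul]
          norm_num
  · intro hlt
    have h3 : specRad S < 1 := lt_of_le_of_lt h2 hlt
    have h4 : specRad S ^ 2 < 1 := pow_lt_one₀ (zero_le) h3 (by norm_num)
    exact lt_of_le_of_lt h1 h4
end

section
/- Let λ > 0 and Z ~ Poi(λ). Then E|√Z − E√Z| ≤ 2, where E√Z = ∑_{k∈ℕ} √k · exp(−λ) λ^k / k! and E|√Z − E√Z| = ∑_{k∈ℕ} |√k − E√Z| · exp(−λ) λ^k / k!. -/
set_option maxHeartbeats 1000000 in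
/-- For `Z ~ Poi(λ)` with `λ > 0`, `E|√Z − E√Z| ≤ 2`. -/
theorem poisson_sqrt_abs_dev_le_two (lam : ℝ) (hlam : 0 < lam) :
    ∑' k : ℕ,
        |Real.sqrt k
            - ∑' j : ℕ, Real.sqrt j * (Real.exp (-lam) * lam ^ j / j.factorial)|
          * (Real.exp (-lam) * lam ^ k / k.factorial)
      ≤ 2 := by
  set p : ℕ → ℝ := fun k => Real.exp (-lam) * lam ^ k / k.factorial with hp
  have hp0 : ∀ k, 0 ≤ p k := fun k => by positivity
  have hsum1 : HasSum p 1 := by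
    have h := ProbabilityTheory.poissonPMFRealSum lam.toNNReal
    have hco : (lam.toNNReal : ℝ) = lam := Real.coe_toNNReal lam hlam.le
    simpa [ProbabilityTheory.poissonPMFReal, hco, hp] using h
  have sp : Summable p := hsum1.summable
  have hrec : ∀ k : ℕ, ((k : ℝ) + 1) * p (k + 1) = lam * p k := by
    intro k
    have hfac : ((k + 1).factorial : ℝ) = ((k : ℝ) + 1) * k.factorial := by
      push_cast [Nat.factorial_succ]; ring
    have hf0 : (k.factorial : ℝ) ≠ 0 := Nat.cast_ne_zero.mpr k.factorial_ne_zero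
    have hkpos : ((k : ℝ) + 1) ≠ 0 := by positivity
    simp only [hp]
    rw [hfac]
    field_simp [hp, hfac, pow_succ]
    ring
  have hA : HasSum (fun k : ℕ => (k : ℝ) * p k) lam := by
    have h : HasSum (fun k : ℕ => lam * p k) (lam * 1) := hsum1.mul_left lam
    have heq : (fun k : ℕ => lam * p k)
        = fun k : ℕ => ((k + 1 : ℕ) : ℝ) * p (k + 1) := by
      funext k
      push_cast
      rw [hrec k]
    rw [heq, mul_one] at h
    have h2 := (hasSum_nat_add_iff (f := fun k : ℕ => (k : ℝ) * p k) 1).mp h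
    simpa using h2
  have hB : HasSum (fun k : ℕ => (k : ℝ) ^ 2 * p k) (lam ^ 2 + lam) := by
    have h : HasSum (fun k : ℕ => lam * ((k : ℝ) * p k) + lam * p k)
        (lam * lam + lam * 1) := (hA.mul_left lam).add (hsum1.mul_left lam)
    have heq : (fun k : ℕ => lam * ((k : ℝ) * p k) + lam * p k)
        = fun k : ℕ => ((k + 1 : ℕ) : ℝ) ^ 2 * p (k + 1) := by
      funext k
      push_cast
      have h3 : ((k : ℝ) + 1) ^ 2 * p (k + 1)
          = ((k : ℝ) + 1) * (((k : ℝ) + 1) * p (k + 1)) := by ring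
      rw [h3, hrec k]; ring
    have hval : lam * lam + lam * 1 = lam ^ 2 + lam := by ring
    rw [heq, hval] at h
    have h2 := (hasSum_nat_add_iff (f := fun k : ℕ => (k : ℝ) ^ 2 * p k) 1).mp h
    simpa using h2
  have hVar : HasSum (fun k : ℕ => ((k : ℝ) - lam) ^ 2 * p k) lam := by
    have h := hB.add ((hA.mul_left (-2 * lam)).add (hsum1.mul_left (lam ^ 2)))
    have heq : (fun k : ℕ => (k : ℝ) ^ 2 * p k
        + ((-2 * lam) * ((k : ℝ) * p k) + lam ^ 2 * p k))
        = fun k : ℕ => ((k : ℝ) - lam) ^ 2 * p k := by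
      funext k; ring
    have hval : lam ^ 2 + lam + ((-2 * lam) * lam + lam ^ 2 * 1) = lam := by ring
    rw [heq, hval] at h
    exact h
  set sl := Real.sqrt lam with hsl
  have hslpos : 0 < sl := Real.sqrt_pos.mpr hlam
  have hsl' : sl * sl = lam := Real.mul_self_sqrt hlam.le
  -- pointwise key bound
  have key : ∀ k : ℕ, |Real.sqrt k - sl| ≤ (((k : ℝ) - lam) ^ 2 + lam) / (2 * lam) := by
    intro k
    have hk0 : (0 : ℝ) ≤ (k : ℝ) := Nat.cast_nonneg k
    have hsk : Real.sqrt k * Real.sqrt k = (k : ℝ) := Real.mul_self_sqrt hk0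
    have h1 : |Real.sqrt k - sl| * sl ≤ |(k : ℝ) - lam| := by
      have hprod : |Real.sqrt k - sl| * (Real.sqrt k + sl) = |(k : ℝ) - lam| := by
        rw [← abs_of_nonneg (show (0 : ℝ) ≤ Real.sqrt k + sl by positivity), ← abs_mul]
        congr 1
        nlinarith
      calc |Real.sqrt k - sl| * sl ≤ |Real.sqrt k - sl| * (Real.sqrt k + sl) := by
            apply mul_le_mul_of_nonneg_left _ (abs_nonneg _)
            nlinarith [Real.sqrt_nonneg (k : ℝ)]
        _ = |(k : ℝ) - lam| := hprod
    have h2 : 2 * sl * |(k : ℝ) - lam| ≤ ((k : ℝ) - lam) ^ 2 + lam := by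
      nlinarith [sq_nonneg (|(k : ℝ) - lam| - sl), sq_abs ((k : ℝ) - lam)]
    rw [le_div_iff₀ (by positivity)]
    nlinarith [abs_nonneg (Real.sqrt k - sl), abs_nonneg ((k : ℝ) - lam)]
  -- the bound function sums to 1
  have hBndSum : HasSum (fun k : ℕ => (((k : ℝ) - lam) ^ 2 + lam) / (2 * lam) * p k) 1 := by
    have h := (hVar.add (hsum1.mul_left lam)).mul_left (1 / (2 * lam))
    have hval : 1 / (2 * lam) * (lam + lam * 1) = 1 := by field_simp; ring
    rw [hval] at h
    refine HasSum.congr_fun h fun k => ?_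
    field_simp
  have sAbs1 : Summable (fun k : ℕ => |Real.sqrt k - sl| * p k) :=
    Summable.of_nonneg_of_le (fun k => by positivity)
      (fun k => mul_le_mul_of_nonneg_right (key k) (hp0 k)) hBndSum.summable
  have hS : ∑' k : ℕ, |Real.sqrt k - sl| * p k ≤ 1 := by
    rw [← hBndSum.tsum_eq]
    exact Summable.tsum_le_tsum (fun k => mul_le_mul_of_nonneg_right (key k) (hp0 k)) sAbs1
      hBndSum.summable
  set m := ∑' j : ℕ, Real.sqrt j * p j with hm
  have sSqrt : Summable (fun j : ℕ => Real.sqrt j * p j) := by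
    refine Summable.of_nonneg_of_le (fun k => by positivity) (fun k => ?_)
      (hA.summable.add sp)
    have hle : Real.sqrt k ≤ (k : ℝ) + 1 := by
      have hk0 : (0 : ℝ) ≤ (k : ℝ) := Nat.cast_nonneg k
      have h1 : Real.sqrt k ≤ Real.sqrt (((k : ℝ) + 1) ^ 2) :=
        Real.sqrt_le_sqrt (by nlinarith)
      rwa [Real.sqrt_sq (by positivity : (0 : ℝ) ≤ (k : ℝ) + 1)] at h1
    calc Real.sqrt k * p k ≤ ((k : ℝ) + 1) * p k :=
          mul_le_mul_of_nonneg_right hle (hp0 k)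
      _ = (k : ℝ) * p k + p k := by ring
  have hmsum : HasSum (fun j : ℕ => Real.sqrt j * p j) m := sSqrt.hasSum
  have hslsum : HasSum (fun j : ℕ => sl * p j) sl := by simpa using hsum1.mul_left sl
  have hdiff : HasSum (fun j : ℕ => sl * p j - Real.sqrt j * p j) (sl - m) :=
    hslsum.sub hmsum
  have sAbs1' : Summable (fun j : ℕ => |sl * p j - Real.sqrt j * p j|) := by
    refine sAbs1.congr fun j => ?_
    rw [← sub_mul, abs_mul, abs_of_nonneg (hp0 j), abs_sub_comm]
  have hc : |sl - m| ≤ ∑' j : ℕ, |Real.sqrt j - sl| * p j := by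
    rw [← hdiff.tsum_eq]
    have hnorm := norm_tsum_le_tsum_norm
      (f := fun j : ℕ => sl * p j - Real.sqrt j * p j)
      (by simpa only [Real.norm_eq_abs] using sAbs1')
    simp only [Real.norm_eq_abs] at hnorm
    calc |∑' j : ℕ, (sl * p j - Real.sqrt j * p j)|
        ≤ ∑' j : ℕ, |sl * p j - Real.sqrt j * p j| := hnorm
      _ = ∑' j : ℕ, |Real.sqrt j - sl| * p j := by
          refine tsum_congr fun j => ?_
          rw [← sub_mul, abs_mul, abs_of_nonneg (hp0 j), abs_sub_comm]
  -- finish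
  have hptwise : ∀ k : ℕ, |Real.sqrt k - m| * p k
      ≤ |Real.sqrt k - sl| * p k + |sl - m| * p k := by
    intro k
    have : |Real.sqrt k - m| ≤ |Real.sqrt k - sl| + |sl - m| := abs_sub_le _ _ _
    nlinarith [hp0 k, abs_nonneg (Real.sqrt k - sl), abs_nonneg (sl - m)]
  have sRHS : Summable (fun k : ℕ => |Real.sqrt k - sl| * p k + |sl - m| * p k) :=
    sAbs1.add (sp.mul_left _)
  have sLHS : Summable (fun k : ℕ => |Real.sqrt k - m| * p k) :=
    Summable.of_nonneg_of_le (fun k => by positivity) hptwise sRHS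
  calc ∑' k : ℕ, |Real.sqrt k - m| * p k
      ≤ ∑' k : ℕ, (|Real.sqrt k - sl| * p k + |sl - m| * p k) :=
        Summable.tsum_le_tsum hptwise sLHS sRHS
    _ = (∑' k : ℕ, |Real.sqrt k - sl| * p k) + |sl - m| * 1 := by
        rw [Summable.tsum_add sAbs1 (sp.mul_left _), ((hsum1.mul_left |sl - m|).tsum_eq)]
    _ ≤ 1 + 1 * 1 := by
        have := le_trans hc hS
        nlinarith [abs_nonneg (sl - m)]
    _ = 2 := by norm_num
end

section
/- Let n ≥ 1, p ∈ (0,1], and Z ~ Bin(n,p). Then E|√Z − E√Z| ≤ 2√(1−p), where E√Z = ∑_{k=0}^{n} √k · C(n,k) p^k (1−p)^{n−k} and E|√Z − E√Z| = ∑_{k=0}^{n} |√k − E√Z| · C(n,k) p^k (1−p)^{n−k}. -/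
namespace BinomialSqrtAux

open Finset

lemma sumW (p : ℝ) (m : ℕ) :
    ∑ k ∈ range (m+1), (m.choose k : ℝ) * p^k * (1-p)^(m-k) = 1 := by
  have h := add_pow p (1-p) m
  simp only [add_sub_cancel, one_pow] at h
  conv_rhs => rw [h]
  exact Finset.sum_congr rfl fun k _ => by ring

lemma shiftSum (p : ℝ) (m : ℕ) (f : ℕ → ℝ) :
    ∑ k ∈ range (m+2), (k:ℝ) * f k * (((m+1).choose k : ℝ) * p^k * (1-p)^(m+1-k))
    = ((m:ℝ)+1) * p * ∑ j ∈ range (m+1), f (j+1) * ((m.choose j : ℝ) * p^j * (1-p)^(m-j)) := by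
  rw [Finset.sum_range_succ']
  simp only [Nat.cast_zero, zero_mul, mul_zero, add_zero, zero_mul]
  rw [Finset.mul_sum]
  refine Finset.sum_congr rfl fun j hj => ?_
  have hc : ((m:ℕ)+1) * (m.choose j) = ((m+1).choose (j+1)) * (j+1) :=
    Nat.add_one_mul_choose_eq m j
  have hc' : ((m:ℝ)+1) * (m.choose j : ℝ) = ((m+1).choose (j+1) : ℝ) * ((j:ℝ)+1) := by
    exact_mod_cast congrArg (Nat.cast : ℕ → ℝ) hc
  have hsub : m + 1 - (j+1) = m - j := by omega
  rw [hsub]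
  push_cast
  linear_combination (-(f (j+1) * p^(j+1) * (1-p)^(m-j))) * hc'

lemma meanBinom (p : ℝ) (m : ℕ) :
    ∑ k ∈ range (m+1), (k:ℝ) * ((m.choose k : ℝ) * p^k * (1-p)^(m-k)) = m * p := by
  induction m with
  | zero => simp
  | succ m _ =>
      have h := shiftSum p m (fun _ => 1)
      simp only [mul_one, one_mul] at h
      rw [h, sumW p m]
      push_cast; ring

lemma sqBinom (p : ℝ) (m : ℕ) :
    ∑ k ∈ range (m+1), (k:ℝ)^2 * ((m.choose k : ℝ) * p^k * (1-p)^(m-k))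
      = m * p * (m * p + 1 - p) := by
  induction m with
  | zero => simp
  | succ m _ =>
      have h := shiftSum p m (fun k => (k:ℝ))
      have h2 : ∑ k ∈ range (m+2), (k:ℝ)^2 * (((m+1).choose k : ℝ) * p^k * (1-p)^(m+1-k))
          = ∑ k ∈ range (m+2), (k:ℝ) * (k:ℝ) * (((m+1).choose k : ℝ) * p^k * (1-p)^(m+1-k)) := by
        refine Finset.sum_congr rfl fun k _ => by ring
      have h3 : ∑ j ∈ range (m+1), ((j:ℕ)+1 : ℝ) * ((m.choose j : ℝ) * p^j * (1-p)^(m-j))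
          = ∑ j ∈ range (m+1), ((j:ℝ) * ((m.choose j : ℝ) * p^j * (1-p)^(m-j))
              + ((m.choose j : ℝ) * p^j * (1-p)^(m-j))) := by
        refine Finset.sum_congr rfl fun j _ => by ring
      rw [h2]
      have h4 : ∑ k ∈ range (m+2), (k:ℝ) * (k:ℝ) * (((m+1).choose k : ℝ) * p^k * (1-p)^(m+1-k))
          = ∑ k ∈ range (m+2), (k:ℝ) * (fun k : ℕ => (k:ℝ)) k * (((m+1).choose k : ℝ) * p^k * (1-p)^(m+1-k)) := rfl
      rw [h4, h]
      have h5 : ∑ j ∈ range (m+1), (fun k : ℕ => (k:ℝ)) (j+1) * ((m.choose j : ℝ) * p^j * (1-p)^(m-j))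
          = ∑ j ∈ range (m+1), ((j:ℝ) * ((m.choose j : ℝ) * p^j * (1-p)^(m-j))
              + ((m.choose j : ℝ) * p^j * (1-p)^(m-j))) := by
        refine Finset.sum_congr rfl fun j _ => by push_cast; ring
      rw [h5, Finset.sum_add_distrib, meanBinom p m, sumW p m]
      push_cast; ring

end BinomialSqrtAux

open Finset BinomialSqrtAux

/-- For `Z ~ Bin(n,p)` with `n ≥ 1` and `p ∈ (0,1]`, `E|√Z − E√Z| ≤ 2√(1−p)`. -/
theorem binomial_sqrt_abs_dev_le (n : ℕ) (hn : 1 ≤ n) (p : ℝ)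
    (hp0 : 0 < p) (hp1 : p ≤ 1) :
    ∑ k ∈ Finset.range (n + 1),
        |Real.sqrt k
            - ∑ j ∈ Finset.range (n + 1),
                Real.sqrt j * ((n.choose j : ℝ) * p ^ j * (1 - p) ^ (n - j))|
          * ((n.choose k : ℝ) * p ^ k * (1 - p) ^ (n - k))
      ≤ 2 * Real.sqrt (1 - p) := by
  have hq0 : (0:ℝ) ≤ 1 - p := by linarith
  set w : ℕ → ℝ := fun k => (n.choose k : ℝ) * p ^ k * (1 - p) ^ (n - k) with hw_def
  have hw : ∀ k, 0 ≤ w k := fun k => by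
    simp only [hw_def]; positivity
  have hsum1 : ∑ k ∈ range (n+1), w k = 1 := sumW p n
  have hmean : ∑ k ∈ range (n+1), (k:ℝ) * w k = n * p := meanBinom p n
  have hsq : ∑ k ∈ range (n+1), (k:ℝ)^2 * w k = n*p*(n*p+1-p) := sqBinom p n
  set μ : ℝ := ∑ j ∈ Finset.range (n + 1),
      Real.sqrt j * ((n.choose j : ℝ) * p ^ j * (1 - p) ^ (n - j)) with hμ_def
  have hμw : μ = ∑ j ∈ range (n+1), Real.sqrt j * w j := rfl
  have hμ0 : 0 ≤ μ := by
    rw [hμw]; exact Finset.sum_nonneg fun j _ => mul_nonneg (Real.sqrt_nonneg _) (hw j)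
  set T : ℝ := ∑ k ∈ range (n+1), (k:ℝ) * Real.sqrt k * w k with hT_def
  have hT0 : 0 ≤ T :=
    Finset.sum_nonneg fun k _ =>
      mul_nonneg (mul_nonneg (Nat.cast_nonneg k) (Real.sqrt_nonneg _)) (hw k)
  have hss : ∀ k : ℕ, Real.sqrt k * Real.sqrt k = (k:ℝ) :=
    fun k => Real.mul_self_sqrt (Nat.cast_nonneg k)
  -- CS1 : (np)^2 ≤ μ * T
  have cs1 : ((n:ℝ)*p)^2 ≤ μ * T := by
    have h := Finset.sum_sq_le_sum_mul_sum_of_sq_eq_mul (range (n+1))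
      (r := fun k => (k:ℝ) * w k)
      (f := fun k => Real.sqrt k * w k)
      (g := fun k => (k:ℝ) * Real.sqrt k * w k)
      (fun k _ => mul_nonneg (Real.sqrt_nonneg _) (hw k))
      (fun k _ => mul_nonneg (mul_nonneg (Nat.cast_nonneg k) (Real.sqrt_nonneg _)) (hw k))
      (fun k _ => by
        linear_combination (-( (k:ℝ) * w k * w k)) * hss k)
    rw [hmean, ← hμw, ← hT_def] at h
    exact h
  -- CS2 : T^2 ≤ (np) * (np(np+1-p))
  have cs2 : T^2 ≤ ((n:ℝ)*p) * ((n:ℝ)*p*((n:ℝ)*p+1-p)) := by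
    have h := Finset.sum_sq_le_sum_mul_sum_of_sq_eq_mul (range (n+1))
      (r := fun k => (k:ℝ) * Real.sqrt k * w k)
      (f := fun k => (k:ℝ) * w k)
      (g := fun k => (k:ℝ)^2 * w k)
      (fun k _ => mul_nonneg (Nat.cast_nonneg k) (hw k))
      (fun k _ => mul_nonneg (sq_nonneg _) (hw k))
      (fun k _ => by
        linear_combination ((k:ℝ)^2 * w k * w k) * hss k)
    rw [hmean, hsq, ← hT_def] at h
    exact h
  -- variance identity
  have hV : ∑ k ∈ range (n+1), (Real.sqrt k - μ)^2 * w k = (n:ℝ)*p - μ^2 := by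
    have expand : ∀ k ∈ range (n+1),
        (Real.sqrt k - μ)^2 * w k
          = ((k:ℝ) * w k + μ^2 * w k) - 2*μ*(Real.sqrt k * w k) := by
      intro k _
      linear_combination (w k) * hss k
    rw [Finset.sum_congr rfl expand, Finset.sum_sub_distrib, Finset.sum_add_distrib,
      hmean, ← Finset.mul_sum, ← Finset.mul_sum, hsum1, ← hμw]
    ring
  -- key : b^2 ≤ μ^2 * (b + 1 - p) where b = np
  have hb : 0 < (n:ℝ)*p := by
    have : (1:ℝ) ≤ (n:ℝ) := by exact_mod_cast hn
    nlinarith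
  have hkey : ((n:ℝ)*p)^2 ≤ μ^2 * ((n:ℝ)*p + 1 - p) := by
    have h1 : ((n:ℝ)*p)^4 ≤ μ^2 * T^2 := by nlinarith [cs1, hμ0, hT0, mul_nonneg hμ0 hT0]
    have h2 : μ^2 * T^2 ≤ μ^2 * (((n:ℝ)*p)^2 * ((n:ℝ)*p + 1 - p)) := by
      have := sq_nonneg μ
      nlinarith [cs2, sq_nonneg μ]
    have h3 : ((n:ℝ)*p)^2 * ((n:ℝ)*p)^2 ≤ ((n:ℝ)*p)^2 * (μ^2*((n:ℝ)*p+1-p)) := by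
      nlinarith [h1, h2]
    exact le_of_mul_le_mul_left h3 (by positivity)
  have hVle : (n:ℝ)*p - μ^2 ≤ 1 - p := by
    nlinarith [hkey, hb, hq0, sq_nonneg (1-p)]
  -- CS3 : MAD^2 ≤ variance
  have cs3 : (∑ k ∈ range (n+1), |Real.sqrt k - μ| * w k)^2 ≤ (n:ℝ)*p - μ^2 := by
    have h := Finset.sum_sq_le_sum_mul_sum_of_sq_eq_mul (range (n+1))
      (r := fun k => |Real.sqrt k - μ| * w k)
      (f := fun k => (Real.sqrt k - μ)^2 * w k)
      (g := fun k => w k)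
      (fun k _ => mul_nonneg (sq_nonneg _) (hw k))
      (fun k _ => hw k)
      (fun k _ => by
        linear_combination (w k * w k) * sq_abs (Real.sqrt (k:ℕ) - μ))
    rw [hsum1, mul_one, hV] at h
    exact h
  have hmad0 : 0 ≤ ∑ k ∈ range (n+1), |Real.sqrt k - μ| * w k :=
    Finset.sum_nonneg fun k _ => mul_nonneg (abs_nonneg _) (hw k)
  have hfin : ∑ k ∈ range (n+1), |Real.sqrt k - μ| * w k ≤ Real.sqrt (1-p) := by
    refine (Real.le_sqrt hmad0 hq0).mpr ?_
    exact le_trans cs3 hVle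
  have := Real.sqrt_nonneg (1-p)
  calc ∑ k ∈ Finset.range (n+1), |Real.sqrt k - μ| * w k ≤ Real.sqrt (1-p) := hfin
    _ ≤ 2 * Real.sqrt (1-p) := by linarith
end

section
/- Let (γ_t)_{t∈ℕ} be a sequence of positive reals satisfying: (γ_t) is monotonically non-decreasing with γ_t → ∞, and γ_{t+1}/γ_t → 1 as t → ∞. Let 0 < b < 1 and x₀ ≥ 0. Then (b^t x₀ + ∑_{s=0}^{t−1} b^s γ_{t−s}) / γ_t → 1/(1−b) as t → ∞. -/
open Filter

private lemma stcar_ratio_aux (γ : ℕ → ℝ) (hpos : ∀ t, 0 < γ t)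
    (hratio : Tendsto (fun t : ℕ => γ (t + 1) / γ t) atTop (nhds 1)) :
    ∀ s : ℕ, Tendsto (fun t : ℕ => γ t / γ (t + s)) atTop (nhds 1) := by
  intro s
  induction s with
  | zero =>
      have h1 : Tendsto (fun _ : ℕ => (1:ℝ)) atTop (nhds 1) := tendsto_const_nhds
      exact h1.congr fun t => by rw [Nat.add_zero, div_self (hpos t).ne']
  | succ s ih =>
      have hinv : Tendsto (fun t : ℕ => γ t / γ (t + 1)) atTop (nhds 1) := by
        have := hratio.inv₀ one_ne_zero
        simpa [inv_div] using this
      have h2 : Tendsto (fun t : ℕ => γ (t + s) / γ (t + s + 1)) atTop (nhds 1) :=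
        hinv.comp (tendsto_add_atTop_nat s)
      have := ih.mul h2
      simp only [one_mul] at this
      refine this.congr (fun t => ?_)
      rw [div_mul_div_comm, mul_comm (γ t) (γ (t + s))]
      rw [mul_div_mul_left _ _ (hpos (t + s)).ne']
      ring_nf

/-- Growth of the deterministic mean of the st-CAR model:
`(b^t x₀ + ∑_{s<t} b^s γ_{t−s}) / γ_t → 1/(1−b)`. -/
theorem stcar_mean_growth (γ : ℕ → ℝ) (hpos : ∀ t, 0 < γ t) (hmono : Monotone γ)
    (hinf : Tendsto γ atTop atTop)
    (hratio : Tendsto (fun t : ℕ => γ (t + 1) / γ t) atTop (nhds 1))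
    (b x₀ : ℝ) (hb0 : 0 < b) (hb1 : b < 1) (hx₀ : 0 ≤ x₀) :
    Tendsto
      (fun t : ℕ => (b ^ t * x₀ + ∑ s ∈ Finset.range t, b ^ s * γ (t - s)) / γ t)
      atTop (nhds (1 / (1 - b))) := by
  -- pointwise limit of the ratio γ(t-s)/γ t
  have hB : ∀ s : ℕ, Tendsto (fun t : ℕ => γ (t - s) / γ t) atTop (nhds 1) := by
    intro s
    have h := (stcar_ratio_aux γ hpos hratio s).comp (tendsto_sub_atTop_nat s)
    refine h.congr' ?_
    filter_upwards [eventually_ge_atTop s] with t ht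
    simp [Function.comp, Nat.sub_add_cancel ht]
  -- define the truncated function
  set F : ℕ → ℕ → ℝ := fun t s => if s < t then b ^ s * (γ (t - s) / γ t) else 0 with hF
  have hsumgeo : Summable (fun s : ℕ => b ^ s) :=
    summable_geometric_of_lt_one hb0.le hb1
  have hpt : ∀ s : ℕ, Tendsto (fun t => F t s) atTop (nhds (b ^ s)) := by
    intro s
    have : Tendsto (fun t : ℕ => b ^ s * (γ (t - s) / γ t)) atTop (nhds (b ^ s)) := by
      simpa using (tendsto_const_nhds (x := b ^ s)).mul (hB s)
    refine this.congr' ?_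
    filter_upwards [eventually_gt_atTop s] with t ht
    simp [hF, ht]
  have hbound : ∀ t : ℕ, ∀ s : ℕ, ‖F t s‖ ≤ b ^ s := by
    intro t s
    by_cases h : s < t
    · simp only [hF, if_pos h]
      rw [Real.norm_eq_abs, abs_mul, abs_of_pos (pow_pos hb0 s)]
      have h1 : |γ (t - s) / γ t| ≤ 1 := by
        rw [abs_of_pos (div_pos (hpos _) (hpos _))]
        exact div_le_one_of_le₀ (hmono (Nat.sub_le t s)) (hpos t).le
      nlinarith [pow_pos hb0 s]
    · simp [hF, h, (pow_pos hb0 s).le]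
  have htsum : Tendsto (fun t => ∑' s, F t s) atTop (nhds (∑' s : ℕ, b ^ s)) :=
    tendsto_tsum_of_dominated_convergence hsumgeo hpt (Eventually.of_forall hbound)
  rw [tsum_geometric_of_lt_one hb0.le hb1] at htsum
  have htsum' : Tendsto
      (fun t => ∑ s ∈ Finset.range t, b ^ s * (γ (t - s) / γ t)) atTop
      (nhds ((1 - b)⁻¹)) := by
    refine htsum.congr (fun t => ?_)
    rw [tsum_eq_sum (s := Finset.range t) (fun s hs => by
      simp [hF, Finset.mem_range.not.mp hs])]
    refine Finset.sum_congr rfl (fun s hs => ?_)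
    simp [hF, Finset.mem_range.mp hs]
  have hfirst : Tendsto (fun t : ℕ => b ^ t * x₀ / γ t) atTop (nhds 0) := by
    have hlim : Tendsto (fun t : ℕ => b ^ t * x₀ / γ 0) atTop (nhds 0) := by
      have := (tendsto_pow_atTop_nhds_zero_of_lt_one hb0.le hb1).mul
        (tendsto_const_nhds (x := x₀ / γ 0))
      simpa [mul_div_assoc] using this
    refine squeeze_zero (fun t => ?_) (fun t => ?_) hlim
    · exact div_nonneg (by positivity) (hpos t).le
    · apply div_le_div_of_nonneg_left (by positivity) (hpos 0) (hmono (Nat.zero_le t))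
  have := hfirst.add htsum'
  rw [zero_add] at this
  rw [one_div]
  refine this.congr (fun t => ?_)
  rw [add_div, Finset.sum_div]
  congr 1
  exact Finset.sum_congr rfl (fun s _ => by rw [mul_div_assoc])
end
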